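/- arXiv:2004.03949 — 3 statements merged into one kernel-verified Lean document; each statement's English description precedes it below -/
import Mathlib

section
/- For every natural number n, A₃(3n+1) ≡ 0 (mod 2) and A₃(3n+2) ≡ 0 (mod 4). -/
open PowerSeries Finset

/-- `E k` is the formal power series `∏_{m ≥ 1} (1 - q^(k*m))` in `ℤ⟦q⟧`:
its coefficient of `qⁿ` only depends on the finitely many factors with `k*m ≤ n`
(for `k ≥ 1`), so we may define it coefficientwise via the finite product over
`1 ≤ m ≤ n`. -/
noncomputable def E (k : ℕ) : PowerSeries ℤ :=
  PowerSeries.mk fun n =>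
    PowerSeries.coeff n
      (∏ m ∈ Finset.Icc 1 n, (1 - (PowerSeries.X : PowerSeries ℤ) ^ (k * m)))

/-- The multiplicative inverse of `E k` in `ℤ⟦q⟧` (its constant term is `1`). -/
noncomputable def Einv (k : ℕ) : PowerSeries ℤ := (E k).invOfUnit 1


/-- Restricted overpartitions: ∑ A_m(n)qⁿ = E₂·E_m·E₁⁻²·E_{2m}⁻¹. -/
noncomputable def A (m n : ℕ) : ℤ :=
  PowerSeries.coeff n (E 2 * E m * (Einv 1) ^ 2 * Einv (2 * m))

namespace A3aux

/-- truncated product -/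
noncomputable def P (k N : ℕ) : PowerSeries ℤ :=
  ∏ m ∈ Finset.Icc 1 N, (1 - (PowerSeries.X : PowerSeries ℤ) ^ (k * m))

/-- coefficients agree up to degree `n` -/
def coeq {R : Type*} [CommRing R] (n : ℕ) (F G : PowerSeries R) : Prop :=
  ∀ j ≤ n, PowerSeries.coeff j F = PowerSeries.coeff j G

variable {R S : Type*} [CommRing R] [CommRing S]

lemma coeq.refl {n : ℕ} (F : PowerSeries R) : coeq n F F := fun _ _ => rfl

lemma coeq.symm {n : ℕ} {F G : PowerSeries R} (h : coeq n F G) : coeq n G F :=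
  fun j hj => (h j hj).symm

lemma coeq.mul {n : ℕ} {F F' G G' : PowerSeries R} (h1 : coeq n F F') (h2 : coeq n G G') :
    coeq n (F * G) (F' * G') := by
  intro j hj
  rw [coeff_mul, coeff_mul]
  apply Finset.sum_congr rfl
  rintro ⟨a, b⟩ hab
  rw [Finset.HasAntidiagonal.mem_antidiagonal] at hab
  have ha : a ≤ n := by omega
  have hb : b ≤ n := by omega
  rw [h1 a ha, h2 b hb]

lemma coeq.prod {n : ℕ} {ι : Type*} {s : Finset ι} {f g : ι → PowerSeries R}
    (h : ∀ i ∈ s, coeq n (f i) (g i)) :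
    coeq n (∏ i ∈ s, f i) (∏ i ∈ s, g i) := by
  classical
  induction s using Finset.induction_on with
  | empty => simpa using coeq.refl 1
  | @insert a s hx ih =>
    rw [Finset.prod_insert hx, Finset.prod_insert hx]
    exact (h a (Finset.mem_insert_self a s)).mul
      (ih fun i hi => h i (Finset.mem_insert_of_mem hi))

lemma coeq.map {n : ℕ} {F G : PowerSeries R} (f : R →+* S) (h : coeq n F G) :
    coeq n (PowerSeries.map f F) (PowerSeries.map f G) := fun j hj => by
  rw [coeff_map, coeff_map, h j hj]

lemma coeff_E (k n : ℕ) : PowerSeries.coeff n (E k) = PowerSeries.coeff n (P k n) :=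
  coeff_mk _ _

lemma coeq_E_P {k n N : ℕ} (hk : 1 ≤ k) (hnN : n ≤ N) : coeq n (E k) (P k N) := by
  intro j hj
  rw [coeff_E]
  have hsplit : P k N = P k j * ∏ m ∈ Finset.Ioc j N,
      (1 - (PowerSeries.X : PowerSeries ℤ) ^ (k * m)) := by
    have e : ∀ M, Finset.Icc 1 M = Finset.Ioc 0 M := fun M => by
      ext x; simp only [Finset.mem_Icc, Finset.mem_Ioc]; omega
    rw [P, P, e, e, Finset.prod_Ioc_consecutive _ (Nat.zero_le j) (le_trans hj hnN)]
  have hQ : coeq j (∏ m ∈ Finset.Ioc j N,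
      (1 - (PowerSeries.X : PowerSeries ℤ) ^ (k * m))) 1 := by
    have h1 : (1 : PowerSeries ℤ) = ∏ _m ∈ Finset.Ioc j N, (1 : PowerSeries ℤ) := by simp
    rw [h1]
    apply coeq.prod
    intro m hm i hi
    rw [Finset.mem_Ioc] at hm
    have : i ≠ k * m := by nlinarith [hm.1, hk]
    simp [coeff_X_pow, this]
  have := (coeq.refl (R := ℤ) (P k j)).mul hQ j le_rfl
  rw [mul_one] at this
  rw [hsplit, this]

/-- support in multiples of `k` -/
def dsupp {R : Type*} [CommRing R] (k : ℕ) (F : PowerSeries R) : Prop :=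
  ∀ j, ¬ (k ∣ j) → PowerSeries.coeff j F = 0

lemma dsupp.mul {k : ℕ} {F G : PowerSeries R} (hF : dsupp k F) (hG : dsupp k G) :
    dsupp k (F * G) := by
  intro j hj
  rw [coeff_mul]
  apply Finset.sum_eq_zero
  rintro ⟨a, b⟩ hab
  rw [Finset.HasAntidiagonal.mem_antidiagonal] at hab
  by_cases ha : k ∣ a
  · have hb : ¬ k ∣ b := fun h => hj (hab ▸ Nat.dvd_add ha h)
    rw [hG b hb, mul_zero]
  · rw [hF a ha, zero_mul]

lemma dsupp.one {k : ℕ} : dsupp k (1 : PowerSeries R) := by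
  intro j hj
  rw [coeff_one, if_neg]
  rintro rfl
  exact hj (dvd_zero k)

lemma dsupp_P (k N : ℕ) : dsupp k (P k N) := by
  rw [P]
  apply Finset.prod_induction _ _ (fun _ _ => dsupp.mul) dsupp.one
  intro m _
  intro j hj
  have hj0 : j ≠ 0 := by rintro rfl; exact hj (dvd_zero k)
  have : j ≠ k * m := by rintro rfl; exact hj ⟨m, rfl⟩
  simp [coeff_one, coeff_X_pow, hj0, this]

lemma dsupp_E (k : ℕ) : dsupp k (E k) := by
  intro j hj
  rw [coeff_E]
  exact dsupp_P k j j hj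

lemma dsupp.mono {k d : ℕ} {F : PowerSeries R} (hdk : d ∣ k) (h : dsupp k F) : dsupp d F :=
  fun j hj => h j (fun hk => hj (dvd_trans hdk hk))

lemma dsupp.map {k : ℕ} {F : PowerSeries R} (f : R →+* S) (h : dsupp k F) :
    dsupp k (PowerSeries.map f F) := fun j hj => by rw [coeff_map, h j hj, map_zero]

lemma dsupp_of_inv {k : ℕ} {F G : PowerSeries R} (h : F * G = 1) (hF : dsupp k F) :
    dsupp k G := by
  intro j
  induction j using Nat.strong_induction_on with
  | _ j IH =>
  intro hj
  have hj0 : j ≠ 0 := by rintro rfl; exact hj (dvd_zero k)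
  have h0 : PowerSeries.coeff j (F * G) = 0 := by rw [h, coeff_one, if_neg hj0]
  rw [coeff_mul, Finset.sum_eq_single (0, j)] at h0
  · have hu : PowerSeries.coeff 0 F * PowerSeries.coeff 0 G = 1 := by
      have h' := congrArg (PowerSeries.constantCoeff) h
      rw [map_mul, map_one] at h'
      simpa [coeff_zero_eq_constantCoeff] using h'
    calc PowerSeries.coeff j G
        = (PowerSeries.coeff 0 F * PowerSeries.coeff 0 G) * PowerSeries.coeff j G := by
          rw [hu, one_mul]
      _ = PowerSeries.coeff 0 G * (PowerSeries.coeff 0 F * PowerSeries.coeff j G) := by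
          ring
      _ = 0 := by rw [h0, mul_zero]
  · rintro ⟨a, b⟩ hab hne
    rw [Finset.HasAntidiagonal.mem_antidiagonal] at hab
    by_cases ha : k ∣ a
    · have ha0 : a ≠ 0 := by
        rintro rfl
        exact hne (by simp [← hab])
      have hb : ¬ k ∣ b := fun hd => hj (hab ▸ Nat.dvd_add ha hd)
      have hblt : b < j := by omega
      rw [IH b hblt hb, mul_zero]
    · rw [hF a ha, zero_mul]
  · intro hmem
    exact absurd (Finset.HasAntidiagonal.mem_antidiagonal.mpr (by simp)) hmem

end A3aux

namespace A3aux

abbrev W : Type := ZMod 4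

lemma two_two_zero : (4 : PowerSeries W) = 0 := by
  have h1 : (4 : PowerSeries W) = ((4 : ℕ) : PowerSeries W) := by norm_num
  rw [h1, ← map_natCast (PowerSeries.C) 4]
  have : ((4 : ℕ) : W) = 0 := by decide
  rw [this, map_zero]

/-- `g m = ∑_{m ∣ n} X^n`, the inverse of `1 - X^m`. -/
noncomputable def g (m : ℕ) : PowerSeries W :=
  PowerSeries.mk fun n => if m ∣ n then 1 else 0

lemma g_mul {m : ℕ} (hm : 1 ≤ m) : (1 - (PowerSeries.X : PowerSeries W) ^ m) * g m = 1 := by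
  ext n
  rw [sub_mul, one_mul, map_sub, coeff_one, coeff_X_pow_mul', g, coeff_mk]
  by_cases h0 : n = 0
  · subst h0
    have hmn : ¬ m ≤ 0 := by omega
    simp [hmn]
  · by_cases hle : m ≤ n
    · have hdvd : (m ∣ n) ↔ (m ∣ n - m) := by
        constructor
        · intro h; exact (Nat.dvd_sub h dvd_rfl)
        · intro h
          have := Nat.dvd_add h (dvd_refl m)
          rwa [Nat.sub_add_cancel hle] at this
      rw [if_pos hle, coeff_mk, if_neg h0]
      by_cases hd : m ∣ n
      · rw [if_pos hd, if_pos (hdvd.mp hd)]; ring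
      · rw [if_neg hd, if_neg (fun h => hd (hdvd.mpr h))]; ring
    · have hd : ¬ m ∣ n := fun h => hle (Nat.le_of_dvd (by omega) h)
      simp [hle, hd, h0]

lemma Xg_eq {m : ℕ} (hm : 1 ≤ m) :
    (PowerSeries.X : PowerSeries W) ^ m * g m = g m - 1 := by
  linear_combination (-1 : PowerSeries W) * g_mul hm

lemma fac {m : ℕ} (hm : 1 ≤ m) :
    (1 - (PowerSeries.X : PowerSeries W) ^ m) ^ 2
      = (1 - PowerSeries.X ^ (2 * m)) * (1 - 2 * (PowerSeries.X ^ m * g m)) := by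
  have h := g_mul hm
  have h4 := two_two_zero
  linear_combination (2 * PowerSeries.X ^ m * (1 + PowerSeries.X ^ m)) * h
    + (PowerSeries.X ^ m) ^ 2 * h4

lemma prod_one_sub_two {ι : Type*} (s : Finset ι) (t : ι → PowerSeries W) :
    ∏ m ∈ s, (1 - 2 * t m) = 1 - 2 * ∑ m ∈ s, t m := by
  classical
  induction s using Finset.induction_on with
  | empty => simp
  | @insert a s ha ih =>
    rw [Finset.prod_insert ha, ih, Finset.sum_insert ha]
    have h4 := two_two_zero
    linear_combination (t a * ∑ m ∈ s, t m) * h4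

/-- `Δ = ∑_{n ≥ 1} d(n) X^n` where `d` is the number of divisors. -/
noncomputable def Δ : PowerSeries W :=
  PowerSeries.mk fun n => if n = 0 then 0 else ((n.divisors.card : ℕ) : W)

lemma coeq_Δ {n N : ℕ} (h : n ≤ N) :
    coeq n Δ (∑ m ∈ Finset.Icc 1 N, (PowerSeries.X : PowerSeries W) ^ m * g m) := by
  intro j hj
  rw [Δ, coeff_mk, map_sum]
  have hc : ∀ m ∈ Finset.Icc 1 N,
      PowerSeries.coeff j (PowerSeries.X ^ m * g m)
        = (if m ∣ j then (1 : W) else 0) - (if j = 0 then 1 else 0) := by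
    intro m hm
    rw [Finset.mem_Icc] at hm
    rw [Xg_eq hm.1, map_sub, g, coeff_mk, coeff_one]
  rw [Finset.sum_congr rfl hc]
  by_cases hj0 : j = 0
  · subst hj0; simp
  · simp only [if_neg hj0, sub_zero]
    rw [Finset.sum_boole]
    have hfil : Finset.filter (· ∣ j) (Finset.Icc 1 N) = j.divisors := by
      ext d
      simp only [Finset.mem_filter, Finset.mem_Icc, Nat.mem_divisors]
      constructor
      · rintro ⟨⟨h1, h2⟩, hd⟩; exact ⟨hd, hj0⟩
      · rintro ⟨hd, -⟩
        have hjpos : 0 < j := Nat.pos_of_ne_zero hj0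
        have hdpos : 0 < d := Nat.pos_of_dvd_of_pos hd hjpos
        exact ⟨⟨hdpos, le_trans (Nat.le_of_dvd hjpos hd) (le_trans hj h)⟩, hd⟩
    rw [hfil]

lemma main_identity :
    (PowerSeries.map (Int.castRingHom W) (E 1)) ^ 2
      = PowerSeries.map (Int.castRingHom W) (E 2) * (1 - 2 * Δ) := by
  ext n
  set ρ := Int.castRingHom W
  have mP : ∀ k N : ℕ, PowerSeries.map ρ (P k N)
      = ∏ m ∈ Finset.Icc 1 N, (1 - (PowerSeries.X : PowerSeries W) ^ (k * m)) := by
    intro k N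
    rw [P, map_prod]
    apply Finset.prod_congr rfl
    intro m _
    rw [map_sub, map_one, map_pow, PowerSeries.map_X]
  have s1 : coeq n (PowerSeries.map ρ (E 1)) (PowerSeries.map ρ (P 1 n)) :=
    coeq.map ρ (coeq_E_P le_rfl le_rfl)
  have s2 : coeq n (PowerSeries.map ρ (E 2)) (PowerSeries.map ρ (P 2 n)) :=
    coeq.map ρ (coeq_E_P (by norm_num) le_rfl)
  have fin : (PowerSeries.map ρ (P 1 n)) ^ 2
      = (PowerSeries.map ρ (P 2 n))
        * (1 - 2 * ∑ m ∈ Finset.Icc 1 n, (PowerSeries.X : PowerSeries W) ^ m * g m) := by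
    rw [mP, mP, ← prod_one_sub_two, ← Finset.prod_mul_distrib, ← Finset.prod_pow]
    apply Finset.prod_congr rfl
    intro m hm
    rw [Finset.mem_Icc] at hm
    rw [one_mul]
    exact fac hm.1
  have hΔ : coeq n (1 - 2 * Δ)
      (1 - 2 * ∑ m ∈ Finset.Icc 1 n, (PowerSeries.X : PowerSeries W) ^ m * g m) := by
    intro j hj
    rw [map_sub, map_sub]
    congr 1
    rw [two_mul, two_mul, map_add, map_add, coeq_Δ le_rfl j hj]
  have lhs : PowerSeries.coeff n ((PowerSeries.map ρ (E 1)) ^ 2)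
      = PowerSeries.coeff n ((PowerSeries.map ρ (P 1 n)) ^ 2) := by
    rw [pow_two, pow_two]
    exact (s1.mul s1) n le_rfl
  have rhs : PowerSeries.coeff n (PowerSeries.map ρ (E 2) * (1 - 2 * Δ))
      = PowerSeries.coeff n ((PowerSeries.map ρ (P 2 n))
        * (1 - 2 * ∑ m ∈ Finset.Icc 1 n, (PowerSeries.X : PowerSeries W) ^ m * g m)) :=
    (s2.mul hΔ) n le_rfl
  rw [lhs, rhs, fin]

end A3aux

namespace A3aux

lemma odd_card_divisors_isSquare {b : ℕ} (hb : b ≠ 0) (h : Odd b.divisors.card) :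
    IsSquare b := by
  rw [Nat.card_divisors hb] at h
  have heven : ∀ p, Even (b.factorization p) := by
    intro p
    by_cases hp : p ∈ b.factorization.support
    · by_contra hodd
      have h1 : Even (b.factorization p + 1) := by
        rw [Nat.even_add_one]
        exact hodd
      have hdvd : (b.factorization p + 1) ∣ b.factorization.prod fun _ k => k + 1 := by
        rw [Finsupp.prod]
        exact Finset.dvd_prod_of_mem _ hp
      obtain ⟨c, hc⟩ := h1
      obtain ⟨d, hd⟩ := hdvd
      have : Even (b.factorization.prod fun _ k => k + 1) :=
        ⟨c * d, by rw [hd, hc]; ring⟩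
      rw [← Nat.not_even_iff_odd] at h
      exact h this
    · rw [Finsupp.notMem_support_iff] at hp
      rw [hp]
      exact Even.zero
  refine ⟨b.factorization.prod fun p k => p ^ (k / 2), ?_⟩
  conv_lhs => rw [← Nat.factorization_prod_pow_eq_self hb]
  rw [Finsupp.prod, Finsupp.prod, ← Finset.prod_mul_distrib]
  apply Finset.prod_congr rfl
  intro p _
  rw [← pow_add]
  congr 1
  obtain ⟨c, hc⟩ := heven p
  omega

lemma not_isSquare_of_mod3 {b : ℕ} (h : b % 3 = 2) : ¬ IsSquare b := by
  rintro ⟨r, rfl⟩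
  have h3 : r % 3 = 0 ∨ r % 3 = 1 ∨ r % 3 = 2 := by omega
  have hm := Nat.mul_mod r r 3
  rcases h3 with h' | h' | h' <;> rw [h'] at hm <;> norm_num at hm <;> omega

lemma constCoeff_E (k : ℕ) : PowerSeries.constantCoeff (E k) = 1 := by
  rw [E, constantCoeff_mk]
  rw [Finset.Icc_eq_empty (by omega : ¬ (1:ℕ) ≤ 0), Finset.prod_empty]
  simp

lemma E_mul_Einv (k : ℕ) : E k * Einv k = 1 := by
  apply PowerSeries.mul_invOfUnit
  rw [constCoeff_E]
  rfl

lemma two_zero2 : (2 : PowerSeries (ZMod 2)) = 0 := by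
  have h1 : (2 : PowerSeries (ZMod 2)) = ((2 : ℕ) : PowerSeries (ZMod 2)) := by norm_num
  rw [h1, ← map_natCast (PowerSeries.C) 2]
  have : ((2 : ℕ) : ZMod 2) = 0 := by decide
  rw [this, map_zero]

end A3aux

open A3aux

theorem A3_congruences (n : ℕ) :
    (2 : ℤ) ∣ A 3 (3 * n + 1) ∧ (4 : ℤ) ∣ A 3 (3 * n + 2) := by
  have hA : ∀ N, A 3 N = PowerSeries.coeff N (E 2 * E 3 * (Einv 1) ^ 2 * Einv 6) := by
    intro N
    norm_num [A]
  set ρ4 : ℤ →+* W := Int.castRingHom W with hρ4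
  set π : W →+* ZMod 2 := ZMod.castHom (by norm_num : (2:ℕ) ∣ 4) (ZMod 2) with hπ
  set big : PowerSeries ℤ := E 2 * E 3 * (Einv 1) ^ 2 * Einv 6 with hbig
  set e1 := PowerSeries.map ρ4 (E 1)
  set e2 := PowerSeries.map ρ4 (E 2)
  set e3 := PowerSeries.map ρ4 (E 3)
  set e6 := PowerSeries.map ρ4 (E 6)
  set i1 := PowerSeries.map ρ4 (Einv 1)
  set i6 := PowerSeries.map ρ4 (Einv 6)
  have h1 : e1 * i1 = 1 := by rw [← map_mul, E_mul_Einv, map_one]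
  have h6 : e6 * i6 = 1 := by rw [← map_mul, E_mul_Einv, map_one]
  have hmapbig : PowerSeries.map ρ4 big = e2 * e3 * i1 ^ 2 * i6 := by
    rw [hbig, map_mul, map_mul, map_mul, map_pow]
  have hone : (1 - 2 * Δ) * (1 + 2 * Δ) = 1 := by
    linear_combination (-(Δ * Δ)) * two_two_zero
  have FW : PowerSeries.map ρ4 big = e3 * i6 * (1 + 2 * Δ) := by
    rw [hmapbig]
    have hu : IsUnit (e1 ^ 2) := (IsUnit.of_mul_eq_one _ h1).pow 2
    apply hu.mul_left_cancel
    calc e1 ^ 2 * (e2 * e3 * i1 ^ 2 * i6)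
        = (e1 * i1) ^ 2 * (e2 * e3 * i6) := by ring
      _ = e2 * e3 * i6 := by rw [h1]; ring
      _ = e2 * e3 * i6 * ((1 - 2 * Δ) * (1 + 2 * Δ)) := by rw [hone, mul_one]
      _ = e2 * (1 - 2 * Δ) * (e3 * i6 * (1 + 2 * Δ)) := by ring
      _ = e1 ^ 2 * (e3 * i6 * (1 + 2 * Δ)) := by rw [← main_identity]
  have de3 : dsupp 3 e3 := (dsupp_E 3).map ρ4
  have di6 : dsupp 3 i6 := dsupp_of_inv h6 (((dsupp_E 6).mono (by norm_num)).map ρ4)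
  have hcomp : ∀ x : ℤ, π (ρ4 x) = (Int.castRingHom (ZMod 2)) x := by
    intro x
    rw [← RingHom.comp_apply]
    exact DFunLike.congr_fun (RingHom.ext_int _ _) x
  constructor
  · -- mod 2
    have key : ((A 3 (3 * n + 1) : ℤ) : ZMod 2) = 0 := by
      rw [hA]
      have : ((PowerSeries.coeff (3 * n + 1) big : ℤ) : ZMod 2)
          = PowerSeries.coeff (3 * n + 1) (PowerSeries.map π (PowerSeries.map ρ4 big)) := by
        rw [coeff_map, coeff_map, hcomp]
        rfl
      have hπΔ : PowerSeries.map π (1 + 2 * Δ) = 1 := by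
        rw [map_add, map_mul, map_one]
        have h2' : PowerSeries.map π (2 : PowerSeries W) = 2 := by
          rw [show (2 : PowerSeries W) = ((2:ℕ) : PowerSeries W) by norm_num, map_natCast]
          norm_num
        rw [h2', two_zero2, zero_mul, add_zero]
      have hmap3 : PowerSeries.map π (e3 * i6 * (1 + 2 * Δ))
          = PowerSeries.map π e3 * PowerSeries.map π i6 := by
        rw [map_mul, map_mul, hπΔ, mul_one]
      rw [this, FW, hmap3]
      exact ((de3.map π).mul (di6.map π)) (3 * n + 1) (by omega)
    exact_mod_cast (ZMod.intCast_zmod_eq_zero_iff_dvd _ 2).mp key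
  · -- mod 4
    have key : ((A 3 (3 * n + 2) : ℤ) : ZMod 4) = 0 := by
      rw [hA]
      have hstep : ((PowerSeries.coeff (3 * n + 2) big : ℤ) : ZMod 4)
          = PowerSeries.coeff (3 * n + 2) (PowerSeries.map ρ4 big) := by
        rw [coeff_map]
        rfl
      rw [hstep, FW]
      have hsplit : e3 * i6 * (1 + 2 * Δ) = e3 * i6 + (e3 * i6 * Δ + e3 * i6 * Δ) := by ring
      rw [hsplit, map_add, map_add]
      rw [(de3.mul di6) (3 * n + 2) (by omega), zero_add]
      set x := PowerSeries.coeff (3 * n + 2) (e3 * i6 * Δ) with hx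
      have hπx : π x = 0 := by
        have hmm : PowerSeries.map π (e3 * i6 * Δ)
            = PowerSeries.map π (e3 * i6) * PowerSeries.map π Δ := map_mul _ _ _
        rw [hx, ← coeff_map, hmm, coeff_mul]
        apply Finset.sum_eq_zero
        rintro ⟨a, b⟩ hab
        rw [Finset.HasAntidiagonal.mem_antidiagonal] at hab
        by_cases hdvd : 3 ∣ a
        · obtain ⟨c, rfl⟩ := hdvd
          have hb2 : b % 3 = 2 := by omega
          have hb0 : b ≠ 0 := by omega
          have hnsq : ¬ IsSquare b := not_isSquare_of_mod3 hb2
          have hev : Even b.divisors.card := by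
            rcases Nat.even_or_odd b.divisors.card with he | ho
            · exact he
            · exact absurd (odd_card_divisors_isSquare hb0 ho) hnsq
          have : PowerSeries.coeff b (PowerSeries.map π Δ) = 0 := by
            rw [coeff_map, Δ, coeff_mk, if_neg hb0, map_natCast]
            exact (ZMod.natCast_eq_zero_iff _ 2).mpr hev.two_dvd
          rw [this, mul_zero]
        · rw [((de3.mul di6).map π) a hdvd, zero_mul]
      have hdec : ∀ y : W, π y = 0 → y + y = 0 := by decide
      exact hdec x hπx
    exact_mod_cast (ZMod.intCast_zmod_eq_zero_iff_dvd _ 4).mp key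
end

section
/- For every natural number n, p₋₈(8n+7) ≡ 0 (mod 2¹¹), i.e., 2048 divides p₋₈(8n+7). -/
open PowerSeries Finset

lemma constantCoeff_E (k : ℕ) : PowerSeries.constantCoeff (E k) = 1 := by
  simp [E]

/-- `E 1` as a unit of `ℤ⟦q⟧`. -/
noncomputable def E1unit : (PowerSeries ℤ)ˣ :=
  ⟨E 1, Einv 1,
    (E 1).mul_invOfUnit 1 (by simp [constantCoeff_E]),
    (E 1).invOfUnit_mul 1 (by simp [constantCoeff_E])⟩

/-- For `r : ℤ`, `pr r n` is the coefficient of `qⁿ` in `E₁ʳ`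
(integer powers are taken in the unit group of `ℤ⟦q⟧`). -/
noncomputable def pr (r : ℤ) (n : ℕ) : ℤ :=
  PowerSeries.coeff n ((E1unit ^ r : (PowerSeries ℤ)ˣ) : PowerSeries ℤ)


namespace JTP

abbrev Z := PowerSeries ℤ

/-- truncated congruence: coefficients agree up to degree n -/
def ceq (n : ℕ) (f g : Z) : Prop := ∀ i ≤ n, PowerSeries.coeff i f = PowerSeries.coeff i g

lemma ceq.refl (n : ℕ) (f : Z) : ceq n f f := fun _ _ => rfl

lemma ceq.symm {n f g} (h : ceq n f g) : ceq n g f := fun i hi => (h i hi).symm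

lemma ceq.trans {n f g h'} (h1 : ceq n f g) (h2 : ceq n g h') : ceq n f h' :=
  fun i hi => (h1 i hi).trans (h2 i hi)

lemma ceq.mul {n f g f' g'} (h1 : ceq n f f') (h2 : ceq n g g') :
    ceq n (f * g) (f' * g') := by
  intro i hi
  rw [PowerSeries.coeff_mul, PowerSeries.coeff_mul]
  apply Finset.sum_congr rfl
  intro p hp
  rw [Finset.HasAntidiagonal.mem_antidiagonal] at hp
  rw [h1 p.1 (by omega), h2 p.2 (by omega)]

lemma ceq_one_of_const {n : ℕ} {c : ℤ} {j : ℕ} (hj : n < j) :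
    ceq n (1 + PowerSeries.C c * PowerSeries.X ^ j) 1 := by
  intro i hi
  simp only [map_add, map_mul, PowerSeries.coeff_C_mul, PowerSeries.coeff_X_pow,
    if_neg (show ¬ i = j by omega)]
  ring

lemma ceq_sub_one {n : ℕ} {j : ℕ} (hj : n < j) :
    ceq n (1 - PowerSeries.X ^ j) 1 := by
  intro i hi
  simp only [map_sub, PowerSeries.coeff_X_pow]
  rw [if_neg (by omega)]
  ring

lemma ceq_add_one {n : ℕ} {j : ℕ} (hj : n < j) :
    ceq n (1 + PowerSeries.X ^ j) 1 := by
  intro i hi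
  simp only [map_add, PowerSeries.coeff_X_pow]
  rw [if_neg (by omega)]
  ring

lemma ceq.prod {n : ℕ} {ι : Type*} (s : Finset ι) (F G : ι → Z)
    (h : ∀ j ∈ s, ceq n (F j) (G j)) : ceq n (∏ j ∈ s, F j) (∏ j ∈ s, G j) := by
  classical
  induction s using Finset.induction with
  | empty => exact ceq.refl n 1
  | @insert a s' hx ih =>
    rw [Finset.prod_insert hx, Finset.prod_insert hx]
    exact (h a (Finset.mem_insert_self a s')).mul
      (ih (fun j hj => h j (Finset.mem_insert_of_mem hj)))

lemma ceq.prod_one {n : ℕ} {ι : Type*} (s : Finset ι) (F : ι → Z)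
    (h : ∀ j ∈ s, ceq n (F j) 1) : ceq n (∏ j ∈ s, F j) 1 := by
  have := ceq.prod s F (fun _ => 1) h
  simpa using this

/-- extend a product over `Icc 1 N` to `Icc 1 M`, `N ≤ M`, when the extra factors are
trivial up to degree n -/
lemma ceq_prod_extend {n N M : ℕ} (hNM : N ≤ M) (F : ℕ → Z)
    (h : ∀ j, N < j → ceq n (F j) 1) :
    ceq n (∏ j ∈ Finset.Icc 1 M, F j) (∏ j ∈ Finset.Icc 1 N, F j) := by
  have hsub : Finset.Icc 1 N ⊆ Finset.Icc 1 M := Finset.Icc_subset_Icc le_rfl hNM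
  rw [← Finset.prod_sdiff hsub]
  have h1 : ceq n (∏ j ∈ Finset.Icc 1 M \ Finset.Icc 1 N, F j) 1 := by
    apply ceq.prod_one
    intro j hj
    simp only [Finset.mem_sdiff, Finset.mem_Icc] at hj
    exact h j (by omega)
  have := h1.mul (ceq.refl n (∏ j ∈ Finset.Icc 1 N, F j))
  simpa using this

lemma ceq_eq {f g : Z} (h : ∀ n, ceq n f g) : f = g :=
  PowerSeries.ext fun n => h n n le_rfl


lemma sum_range_even (m : ℕ) (F : ℕ → ℤ) :
    ∑ i ∈ (Finset.range (2*m+1)).filter (fun i => 2 ∣ i), F i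
      = ∑ j ∈ Finset.range (m+1), F (2*j) := by
  apply Finset.sum_nbij' (i := fun i => i / 2) (j := fun j => 2 * j)
  · intro a ha; simp only [Finset.mem_filter, Finset.mem_range] at ha ⊢; omega
  · intro a ha; simp only [Finset.mem_filter, Finset.mem_range] at ha ⊢
    constructor
    · omega
    · omega
  · intro a ha; simp only [Finset.mem_filter, Finset.mem_range] at ha; omega
  · intro a ha; simp only [Finset.mem_range] at ha; omega
  · intro a ha; simp only [Finset.mem_filter, Finset.mem_range] at ha
    congr 1; omega

/-- coefficient-level substitution X ↦ X²  -/
noncomputable def sq (f : Z) : Z :=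
  PowerSeries.mk fun n => if 2 ∣ n then PowerSeries.coeff (n / 2) f else 0

lemma coeff_sq_even (f : Z) (m : ℕ) :
    PowerSeries.coeff (2 * m) (sq f) = PowerSeries.coeff m f := by
  simp [sq, PowerSeries.coeff_mk, Nat.mul_div_cancel_left m (by norm_num : 0 < 2)]

lemma coeff_sq_odd (f : Z) (n : ℕ) (h : ¬ 2 ∣ n) :
    PowerSeries.coeff n (sq f) = 0 := by
  simp [sq, PowerSeries.coeff_mk, h]

lemma sq_mul (f g : Z) : sq (f * g) = sq f * sq g := by
  ext n
  rcases Nat.even_or_odd n with ⟨m, hm⟩ | ⟨m2, hm2⟩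
  · subst hm
    rw [show m + m = 2 * m by ring, coeff_sq_even, PowerSeries.coeff_mul,
      PowerSeries.coeff_mul]
    rw [Finset.Nat.sum_antidiagonal_eq_sum_range_succ
        (f := fun i j => PowerSeries.coeff i (sq f) * PowerSeries.coeff j (sq g)),
      Finset.Nat.sum_antidiagonal_eq_sum_range_succ
        (f := fun i j => PowerSeries.coeff i f * PowerSeries.coeff j g)]
    rw [← Finset.sum_filter_add_sum_filter_not (Finset.range (2 * m + 1)) (fun i => 2 ∣ i)]
    have h2 : ∑ i ∈ Finset.filter (fun i => ¬ 2 ∣ i) (Finset.range (2 * m + 1)),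
        PowerSeries.coeff i (sq f) * PowerSeries.coeff (2 * m - i) (sq g) = 0 := by
      apply Finset.sum_eq_zero
      intro i hi
      simp only [Finset.mem_filter] at hi
      rw [coeff_sq_odd f i hi.2]
      ring
    rw [h2, add_zero, sum_range_even]
    apply Finset.sum_congr rfl
    intro j hj
    simp only [Finset.mem_range] at hj
    rw [coeff_sq_even, show 2*m - 2*j = 2*(m - j) by omega, coeff_sq_even]
  · subst hm2
    have h1 : ¬ 2 ∣ (2*m2+1) := by omega
    rw [coeff_sq_odd _ _ h1, PowerSeries.coeff_mul]
    apply (Finset.sum_eq_zero _).symm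
    intro p hp
    rw [Finset.HasAntidiagonal.mem_antidiagonal] at hp
    rcases Nat.even_or_odd p.1 with ⟨c, hc⟩ | ⟨c, hc⟩
    · have : ¬ 2 ∣ p.2 := by omega
      rw [coeff_sq_odd _ _ this]; ring
    · have : ¬ 2 ∣ p.1 := by omega
      rw [coeff_sq_odd _ _ this]; ring

lemma sq_add (f g : Z) : sq (f + g) = sq f + sq g := by
  ext n
  rcases Nat.even_or_odd n with ⟨m, hm⟩ | ⟨m2, hm2⟩
  · subst hm
    rw [show m + m = 2*m by ring, map_add, coeff_sq_even, coeff_sq_even, coeff_sq_even, map_add]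
  · subst hm2
    have h1 : ¬ 2 ∣ (2*m2+1) := by omega
    rw [map_add, coeff_sq_odd _ _ h1, coeff_sq_odd _ _ h1, coeff_sq_odd _ _ h1]
    ring

lemma sq_one : sq (1 : Z) = 1 := by
  ext n
  rcases Nat.eq_zero_or_pos n with h0 | hp
  · subst h0
    rw [show (0:ℕ) = 2*0 by ring, coeff_sq_even]
  · rcases Nat.even_or_odd n with ⟨m, hm⟩ | ⟨m2, hm2⟩
    · subst hm
      rw [show m + m = 2*m by ring, coeff_sq_even]
      have hm0 : 0 < m := by omega
      rw [PowerSeries.coeff_one, PowerSeries.coeff_one, if_neg (by omega), if_neg (by omega)]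
    · subst hm2
      rw [coeff_sq_odd _ _ (by omega), PowerSeries.coeff_one, if_neg (by omega)]

/-- `sq` as a ring homomorphism -/
noncomputable def sqHom : Z →+* Z where
  toFun := sq
  map_one' := sq_one
  map_mul' := sq_mul
  map_zero' := by
    ext n
    rcases Nat.even_or_odd n with ⟨m, hm⟩ | ⟨m2, hm2⟩
    · subst hm; rw [show m + m = 2*m by ring, coeff_sq_even]; simp
    · subst hm2; rw [coeff_sq_odd _ _ (by omega)]; simp
  map_add' := sq_add

lemma sqHom_apply (f : Z) : sqHom f = sq f := rfl

lemma sq_X_pow (j : ℕ) : sq ((PowerSeries.X : Z) ^ j) = PowerSeries.X ^ (2*j) := by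
  ext n
  rcases Nat.even_or_odd n with ⟨m, hm⟩ | ⟨m2, hm2⟩
  · subst hm
    rw [show m + m = 2*m by ring, coeff_sq_even, PowerSeries.coeff_X_pow,
      PowerSeries.coeff_X_pow]
    by_cases h : m = j
    · rw [if_pos h, if_pos (by omega)]
    · rw [if_neg h, if_neg (by omega)]
  · subst hm2
    rw [coeff_sq_odd _ _ (by omega), PowerSeries.coeff_X_pow, if_neg (by omega)]

lemma sq_X : sq (PowerSeries.X : Z) = PowerSeries.X ^ 2 := by
  have := sq_X_pow 1
  simpa using this

lemma constantCoeff_sq (f : Z) :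
    PowerSeries.constantCoeff (sq f) = PowerSeries.constantCoeff f := by
  have h := coeff_sq_even f 0
  simpa [PowerSeries.coeff_zero_eq_constantCoeff] using h


lemma ceq.sq2 {n : ℕ} {f g : Z} (h : ceq n f g) : ceq (2*n+1) (sq f) (sq g) := by
  intro i hi
  rcases Nat.even_or_odd i with ⟨m, hm⟩ | ⟨m, hm⟩
  · subst hm
    rw [show m + m = 2*m by ring, coeff_sq_even, coeff_sq_even]
    exact h m (by omega)
  · subst hm
    rw [coeff_sq_odd _ _ (by omega), coeff_sq_odd _ _ (by omega)]

lemma ceq_of_le {n n' : ℕ} {f g : Z} (h : ceq n f g) (hle : n' ≤ n) : ceq n' f g :=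
  fun i hi => h i (le_trans hi hle)

lemma sq_prod {ι : Type*} (s : Finset ι) (F : ι → Z) :
    sq (∏ j ∈ s, F j) = ∏ j ∈ s, sq (F j) := by
  rw [← sqHom_apply, map_prod]
  simp [sqHom_apply]

lemma sq_one_sub_pow (j : ℕ) : sq (1 - PowerSeries.X ^ j) = 1 - PowerSeries.X ^ (2*j) := by
  rw [← sqHom_apply, map_sub, map_one, sqHom_apply, sq_X_pow]

lemma sq_one_add_pow (j : ℕ) : sq (1 + PowerSeries.X ^ j) = 1 + PowerSeries.X ^ (2*j) := by
  rw [← sqHom_apply, map_add, map_one, sqHom_apply, sq_X_pow]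

/-- `∏ (1+Xʲ)` -/
noncomputable def Pp : Z :=
  PowerSeries.mk fun n => PowerSeries.coeff n (∏ j ∈ Finset.Icc 1 n, (1 + PowerSeries.X ^ j))

/-- `∏ (1+X^{2j-1})` -/
noncomputable def Po : Z :=
  PowerSeries.mk fun n =>
    PowerSeries.coeff n (∏ j ∈ Finset.Icc 1 n, (1 + PowerSeries.X ^ (2*j-1)))

lemma ceq_Pp {n N : ℕ} (h : n ≤ N) :
    ceq n Pp (∏ j ∈ Finset.Icc 1 N, (1 + PowerSeries.X ^ j)) := by
  intro i hi
  rw [Pp, PowerSeries.coeff_mk]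
  exact ((ceq_prod_extend (show i ≤ N by omega) _
    (fun j hj => ceq_add_one hj)) i le_rfl).symm

lemma ceq_Po {n N : ℕ} (h : n ≤ N) :
    ceq n Po (∏ j ∈ Finset.Icc 1 N, (1 + PowerSeries.X ^ (2*j-1))) := by
  intro i hi
  rw [Po, PowerSeries.coeff_mk]
  exact ((ceq_prod_extend (show i ≤ N by omega) _
    (fun j hj => ceq_add_one (by omega))) i le_rfl).symm

lemma ceq_E1 {n N : ℕ} (h : n ≤ N) :
    ceq n (E 1) (∏ j ∈ Finset.Icc 1 N, (1 - PowerSeries.X ^ j)) := by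
  intro i hi
  rw [E, PowerSeries.coeff_mk]
  simp only [one_mul]
  exact ((ceq_prod_extend (show i ≤ N by omega) _
    (fun j hj => ceq_sub_one hj)) i le_rfl).symm

lemma ceq_sqE1 {n N : ℕ} (h : n ≤ N) :
    ceq n (sq (E 1)) (∏ j ∈ Finset.Icc 1 N, (1 - PowerSeries.X ^ (2*j))) := by
  have h1 : ceq (2*N+1) (sq (E 1))
      (sq (∏ j ∈ Finset.Icc 1 N, (1 - PowerSeries.X ^ j))) := (ceq_E1 le_rfl).sq2
  have h2 : sq (∏ j ∈ Finset.Icc 1 N, (1 - PowerSeries.X ^ j))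
      = ∏ j ∈ Finset.Icc 1 N, (1 - PowerSeries.X ^ (2*j)) := by
    rw [sq_prod]
    exact Finset.prod_congr rfl (fun j _ => sq_one_sub_pow j)
  rw [h2] at h1
  exact ceq_of_le h1 (by omega)

lemma ceq_sqPp {n N : ℕ} (h : n ≤ N) :
    ceq n (sq Pp) (∏ j ∈ Finset.Icc 1 N, (1 + PowerSeries.X ^ (2*j))) := by
  have h1 : ceq (2*N+1) (sq Pp)
      (sq (∏ j ∈ Finset.Icc 1 N, (1 + PowerSeries.X ^ j))) := (ceq_Pp le_rfl).sq2
  have h2 : sq (∏ j ∈ Finset.Icc 1 N, (1 + PowerSeries.X ^ j))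
      = ∏ j ∈ Finset.Icc 1 N, (1 + PowerSeries.X ^ (2*j)) := by
    rw [sq_prod]
    exact Finset.prod_congr rfl (fun j _ => sq_one_add_pow j)
  rw [h2] at h1
  exact ceq_of_le h1 (by omega)

/-- splitting a product over `Icc 1 (2N)` into odd and even indices -/
lemma prod_Icc_split (g : ℕ → Z) (N : ℕ) :
    ∏ j ∈ Finset.Icc 1 (2*N), g j
      = (∏ i ∈ Finset.Icc 1 N, g (2*i-1)) * (∏ i ∈ Finset.Icc 1 N, g (2*i)) := by
  induction N with
  | zero => simp
  | succ N ih =>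
    rw [show 2*(N+1) = (2*N+1)+1 by ring, Finset.prod_Icc_succ_top (by omega),
      Finset.prod_Icc_succ_top (by omega), ih,
      Finset.prod_Icc_succ_top (show 1 ≤ N+1 by omega),
      Finset.prod_Icc_succ_top (show 1 ≤ N+1 by omega),
      show 2*(N+1)-1 = 2*N+1 by omega, show 2*(N+1) = 2*N+1+1 by omega]
    ring

/-- Pp * E1 = sq E1,  i.e.  ∏(1+Xʲ)(1-Xʲ) = ∏(1-X²ʲ) -/
lemma Pp_mul_E1 : Pp * E 1 = sq (E 1) := by
  apply ceq_eq
  intro n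
  have h1 : ceq n (Pp * E 1)
      ((∏ j ∈ Finset.Icc 1 n, (1 + PowerSeries.X ^ j)) *
        (∏ j ∈ Finset.Icc 1 n, (1 - PowerSeries.X ^ j))) :=
    (ceq_Pp le_rfl).mul (ceq_E1 le_rfl)
  have h2 : (∏ j ∈ Finset.Icc 1 n, (1 + (PowerSeries.X : Z) ^ j)) *
        (∏ j ∈ Finset.Icc 1 n, (1 - (PowerSeries.X : Z) ^ j))
      = ∏ j ∈ Finset.Icc 1 n, (1 - (PowerSeries.X : Z) ^ (2*j)) := by
    rw [← Finset.prod_mul_distrib]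
    apply Finset.prod_congr rfl
    intro j _
    rw [show 2*j = j + j by ring, pow_add]
    ring
  rw [h2] at h1
  exact h1.trans (ceq_sqE1 le_rfl).symm

/-- Pp = Po * sq Pp,  i.e.  ∏(1+Xʲ) = ∏(1+X^{2j-1}) ∏(1+X^{2j}) -/
lemma Pp_split : Pp = Po * sq Pp := by
  apply ceq_eq
  intro n
  have h1 : ceq n Pp (∏ j ∈ Finset.Icc 1 (2*n), (1 + PowerSeries.X ^ j)) :=
    ceq_Pp (by omega)
  rw [prod_Icc_split (fun j => 1 + PowerSeries.X ^ j) n] at h1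
  exact h1.trans (((ceq_Po (le_refl n)).mul (ceq_sqPp (le_refl n))).symm)


/-- `D w m = ∏_{j=1}^m (1 - X^{wj})` -/
noncomputable def Dd (w m : ℕ) : Z := ∏ j ∈ Finset.Icc 1 m, (1 - PowerSeries.X ^ (w*j))

lemma constantCoeff_Dd (w m : ℕ) (hw : 0 < w) :
    PowerSeries.constantCoeff (Dd w m) = 1 := by
  rw [Dd, map_prod]
  apply Finset.prod_eq_one
  intro j hj
  rw [Finset.mem_Icc] at hj
  have hne : w * j ≠ 0 := Nat.mul_ne_zero (by omega) (by omega)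
  rw [map_sub, map_one, map_pow, PowerSeries.constantCoeff_X,
    zero_pow hne, sub_zero]

/-- inverse of `D w m` -/
noncomputable def Ii (w m : ℕ) : Z := (Dd w m).invOfUnit 1

lemma Dd_mul_Ii (w m : ℕ) (hw : 0 < w) : Dd w m * Ii w m = 1 :=
  PowerSeries.mul_invOfUnit _ 1 (by simp [constantCoeff_Dd w m hw])

lemma Ii_mul_Dd (w m : ℕ) (hw : 0 < w) : Ii w m * Dd w m = 1 := by
  rw [mul_comm]; exact Dd_mul_Ii w m hw

lemma Dd_succ (w m : ℕ) : Dd w (m+1) = Dd w m * (1 - PowerSeries.X ^ (w*(m+1))) := by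
  rw [Dd, Dd, Finset.prod_Icc_succ_top (by omega)]

lemma Dd_zero (w : ℕ) : Dd w 0 = 1 := by simp [Dd]

lemma Ii_zero (w : ℕ) (hw : 0 < w) : Ii w 0 = 1 := by
  have h := Dd_mul_Ii w 0 hw
  rwa [Dd_zero, one_mul] at h

lemma Ii_succ (w m : ℕ) (hw : 0 < w) :
    Ii w m = (1 - PowerSeries.X ^ (w*(m+1))) * Ii w (m+1) := by
  have h1 := Dd_mul_Ii w (m+1) hw
  have h2 := Ii_mul_Dd w m hw
  calc Ii w m = Ii w m * (Dd w (m+1) * Ii w (m+1)) := by rw [h1, mul_one]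
  _ = (Ii w m * Dd w m) * ((1 - PowerSeries.X ^ (w*(m+1))) * Ii w (m+1)) := by
      rw [Dd_succ]; ring
  _ = (1 - PowerSeries.X ^ (w*(m+1))) * Ii w (m+1) := by rw [h2, one_mul]

/-- Gaussian binomial as a power series -/
noncomputable def BB (w a b : ℕ) : Z := Dd w (a+b) * (Ii w a * Ii w b)

lemma BB_comm (w a b : ℕ) : BB w a b = BB w b a := by
  rw [BB, BB, Nat.add_comm]; ring

lemma BB_zero_left (w b : ℕ) (hw : 0 < w) : BB w 0 b = 1 := by
  rw [BB, Ii_zero w hw, Nat.zero_add, one_mul, Dd_mul_Ii w b hw]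

lemma BB_zero_right (w a : ℕ) (hw : 0 < w) : BB w a 0 = 1 := by
  rw [BB_comm]; exact BB_zero_left w a hw

/-- Pascal recurrence, first form:
`B(a+1, b+1) = B(a+1, b) + X^{w(b+1)} B(a, b+1)` -/
lemma BB_pascal1 (w a b : ℕ) (hw : 0 < w) :
    BB w (a+1) (b+1) = BB w (a+1) b + PowerSeries.X ^ (w*(b+1)) * BB w a (b+1) := by
  rw [BB, BB, BB]
  rw [show a+1+(b+1) = (a+1+b)+1 by ring, Dd_succ w (a+1+b)]
  rw [show Ii w b = (1 - PowerSeries.X ^ (w*(b+1))) * Ii w (b+1) from Ii_succ w b hw]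
  rw [show Ii w a = (1 - PowerSeries.X ^ (w*(a+1))) * Ii w (a+1) from Ii_succ w a hw]
  rw [show a + (b+1) = a+1+b by ring]
  have hpq : (PowerSeries.X : Z) ^ (w*(a+1+b+1))
      = PowerSeries.X ^ (w*(b+1)) * PowerSeries.X ^ (w*(a+1)) := by
    rw [← pow_add]; congr 1; ring
  rw [hpq]; ring

/-- Pascal recurrence, second form:
`B(a+1, b+1) = B(a, b+1) + X^{w(a+1)} B(a+1, b)` -/
lemma BB_pascal2 (w a b : ℕ) (hw : 0 < w) :
    BB w (a+1) (b+1) = BB w a (b+1) + PowerSeries.X ^ (w*(a+1)) * BB w (a+1) b := by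
  have h := BB_pascal1 w b a hw
  rw [BB_comm w (b+1) (a+1), BB_comm w (b+1) a, BB_comm w b (a+1)] at h
  exact h

/-- extended binomial, zero for negative indices -/
noncomputable def Bz (w : ℕ) (a b : ℤ) : Z :=
  if 0 ≤ a ∧ 0 ≤ b then BB w a.toNat b.toNat else 0

lemma Bz_of_nonneg {a b : ℤ} (w : ℕ) (ha : 0 ≤ a) (hb : 0 ≤ b) :
    Bz w a b = BB w a.toNat b.toNat := if_pos ⟨ha, hb⟩

lemma Bz_neg {a b : ℤ} (w : ℕ) (h : a < 0 ∨ b < 0) : Bz w a b = 0 := by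
  rw [Bz, if_neg]; omega

lemma Bz_coe (w : ℕ) (p q : ℕ) : Bz w p q = BB w p q := by
  rw [Bz_of_nonneg w (by omega) (by omega)]
  simp

/-- ℕ-level double-Pascal expansion -/
lemma BB_expand (w p q : ℕ) (hw : 0 < w) :
    BB w (p+1) (q+1)
      = (1 + PowerSeries.X ^ (w*(p+q+1))) * BB w p q
        + PowerSeries.X ^ (w*(q+1)) * (if p = 0 then 0 else BB w (p-1) (q+1))
        + PowerSeries.X ^ (w*(p+1)) * (if q = 0 then 0 else BB w (p+1) (q-1)) := by
  rcases Nat.eq_zero_or_pos p with rfl | hp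
  · rcases Nat.eq_zero_or_pos q with rfl | hq
    · simp only [if_pos rfl]
      rw [BB_pascal1 w 0 0 hw, BB_zero_left _ _ hw, BB_zero_left _ _ hw,
        BB_zero_right _ _ hw]
      simp only [if_true]
      ring
    · obtain ⟨q', rfl⟩ : ∃ q', q = q' + 1 := ⟨q - 1, by omega⟩
      simp only [if_pos rfl, if_neg (Nat.succ_ne_zero q')]
      rw [show q'+1-1 = q' by omega]
      rw [BB_pascal1 w 0 (q'+1) hw, BB_zero_left _ _ hw,
        BB_pascal2 w 0 q' hw, BB_zero_left _ _ hw]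
      rw [show w*(0+(q'+1)+1) = w*(q'+1+1) by ring]
      simp only [if_true]
      ring
  · obtain ⟨p', rfl⟩ : ∃ p', p = p' + 1 := ⟨p - 1, by omega⟩
    rcases Nat.eq_zero_or_pos q with rfl | hq
    · simp only [if_pos rfl, if_neg (Nat.succ_ne_zero p')]
      rw [show p'+1-1 = p' by omega]
      rw [BB_pascal1 w (p'+1) 0 hw, BB_zero_right _ _ hw,
        BB_pascal2 w p' 0 hw, BB_zero_right _ _ hw]
      rw [show w*(p'+1+0+1) = w*(p'+1+1) by ring]
      have hx : (PowerSeries.X : Z)^(w*(p'+1+1))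
          = PowerSeries.X ^ (w*(0+1)) * PowerSeries.X ^ (w*(p'+1)) := by
        rw [← pow_add]; congr 1; ring
      simp only [if_true]
      rw [hx]; ring
    · obtain ⟨q', rfl⟩ : ∃ q', q = q' + 1 := ⟨q - 1, by omega⟩
      simp only [if_neg (Nat.succ_ne_zero p'), if_neg (Nat.succ_ne_zero q')]
      rw [show p'+1-1 = p' by omega, show q'+1-1 = q' by omega]
      rw [BB_pascal1 w (p'+1) (q'+1) hw]
      rw [BB_pascal2 w (p'+1) q' hw]
      rw [BB_pascal2 w p' (q'+1) hw]
      have hx : (PowerSeries.X : Z)^(w*(p'+1+(q'+1)+1))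
          = PowerSeries.X ^ (w*(q'+1+1)) * PowerSeries.X ^ (w*(p'+1)) := by
        rw [← pow_add]; congr 1; ring
      rw [hx]; ring

/-- main expansion: the double-Pascal step, with zero extension -/
lemma Bz_expand (w : ℕ) (hw : 0 < w) (a b : ℤ) (ha : -1 ≤ a) (hb : -1 ≤ b)
    (hab : 0 ≤ a + b) :
    Bz w (a+1) (b+1)
      = (1 + PowerSeries.X ^ (w*(a+b+1).toNat)) * Bz w a b
        + PowerSeries.X ^ (w*(b+1).toNat) * Bz w (a-1) (b+1)
        + PowerSeries.X ^ (w*(a+1).toNat) * Bz w (a+1) (b-1) := by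
  rcases eq_or_lt_of_le ha with ha' | ha'
  · -- a = -1, so b ≥ 1
    have hb1 : 1 ≤ b := by omega
    have e1 : Bz w a b = 0 := Bz_neg w (Or.inl (by omega))
    have e2 : Bz w (a-1) (b+1) = 0 := Bz_neg w (Or.inl (by omega))
    have e3 : Bz w (a+1) (b+1) = 1 := by
      rw [show a + 1 = 0 by omega, Bz_of_nonneg w le_rfl (by omega)]
      exact BB_zero_left _ _ hw
    have e4 : Bz w (a+1) (b-1) = 1 := by
      rw [show a + 1 = 0 by omega, Bz_of_nonneg w le_rfl (by omega)]
      exact BB_zero_left _ _ hw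
    rw [e1, e2, e3, e4, show a + 1 = 0 by omega]
    simp
  rcases eq_or_lt_of_le hb with hb' | hb'
  · -- b = -1, so a ≥ 1
    have ha1 : 1 ≤ a := by omega
    have e1 : Bz w a b = 0 := Bz_neg w (Or.inr (by omega))
    have e2 : Bz w (a+1) (b-1) = 0 := Bz_neg w (Or.inr (by omega))
    have e3 : Bz w (a+1) (b+1) = 1 := by
      rw [show b + 1 = 0 by omega, Bz_of_nonneg w (by omega) le_rfl]
      exact BB_zero_right _ _ hw
    have e4 : Bz w (a-1) (b+1) = 1 := by
      rw [show b + 1 = 0 by omega, Bz_of_nonneg w (by omega) le_rfl]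
      exact BB_zero_right _ _ hw
    rw [e1, e2, e3, e4, show b + 1 = 0 by omega]
    simp
  -- main case: a, b ≥ 0
  obtain ⟨p, rfl⟩ : ∃ p : ℕ, a = (p : ℤ) := ⟨a.toNat, by omega⟩
  obtain ⟨q, rfl⟩ : ∃ q : ℕ, b = (q : ℤ) := ⟨b.toNat, by omega⟩
  have e0 : Bz w ((p:ℤ)+1) ((q:ℤ)+1) = BB w (p+1) (q+1) := by
    rw [Bz_of_nonneg w (by omega) (by omega)]
    congr 1 <;> omega
  have e1 : Bz w (p:ℤ) (q:ℤ) = BB w p q := Bz_coe w p q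
  have e2 : Bz w ((p:ℤ)-1) ((q:ℤ)+1) = (if p = 0 then 0 else BB w (p-1) (q+1)) := by
    rcases Nat.eq_zero_or_pos p with rfl | hp
    · rw [if_pos rfl]
      exact Bz_neg w (Or.inl (by omega))
    · rw [if_neg (show ¬ p = 0 by omega),
        Bz_of_nonneg (a := (p:ℤ)-1) (b := (q:ℤ)+1) w (by omega) (by omega),
        show ((p:ℤ)-1).toNat = p-1 by omega, show ((q:ℤ)+1).toNat = q+1 by omega]
  have e3 : Bz w ((p:ℤ)+1) ((q:ℤ)-1) = (if q = 0 then 0 else BB w (p+1) (q-1)) := by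
    rcases Nat.eq_zero_or_pos q with rfl | hq
    · rw [if_pos rfl]
      exact Bz_neg w (Or.inr (by omega))
    · rw [if_neg (show ¬ q = 0 by omega),
        Bz_of_nonneg (a := (p:ℤ)+1) (b := (q:ℤ)-1) w (by omega) (by omega),
        show ((p:ℤ)+1).toNat = p+1 by omega, show ((q:ℤ)-1).toNat = q-1 by omega]
  rw [e0, e1, e2, e3,
    show ((p:ℤ) + q + 1).toNat = p+q+1 by omega,
    show ((q:ℤ) + 1).toNat = q+1 by omega,
    show ((p:ℤ) + 1).toNat = p+1 by omega]
  exact BB_expand w p q hw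


/-- single term of the bilateral sum -/
noncomputable def Tm (w : ℕ) (e : ℤ → ℕ) (N : ℕ) (k : ℤ) : Z :=
  PowerSeries.X ^ (e k) * Bz w ((N:ℤ)+k) ((N:ℤ)-k)

/-- the bilateral sum `∑_{k=-N}^{N} X^{e k} B(N+k, N-k)` -/
noncomputable def Rr (w : ℕ) (e : ℤ → ℕ) (N : ℕ) : Z :=
  ∑ k ∈ Finset.Icc (-(N:ℤ)) (N:ℤ), Tm w e N k

lemma Tm_zero (w : ℕ) (e : ℤ → ℕ) (N : ℕ) (k : ℤ) (h : (N:ℤ) < k ∨ k < -(N:ℤ)) :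
    Tm w e N k = 0 := by
  rw [Tm, Bz_neg w (by omega), mul_zero]

lemma sum_Tm_over (w : ℕ) (e : ℤ → ℕ) (N : ℕ) (A B : ℤ)
    (hA : A ≤ -(N:ℤ)) (hB : (N:ℤ) ≤ B) :
    ∑ k ∈ Finset.Icc A B, Tm w e N k = Rr w e N := by
  rw [Rr]
  symm
  apply Finset.sum_subset (Finset.Icc_subset_Icc hA hB)
  intro x hx hnx
  rw [Finset.mem_Icc] at hx hnx
  exact Tm_zero w e N x (by omega)

lemma sum_shift (f : ℤ → Z) (a b c : ℤ) :
    ∑ k ∈ Finset.Icc a b, f (k+c) = ∑ k ∈ Finset.Icc (a+c) (b+c), f k := by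
  apply Finset.sum_nbij' (i := fun k => k+c) (j := fun k => k-c)
  · intro x hx; rw [Finset.mem_Icc] at hx ⊢; omega
  · intro x hx; rw [Finset.mem_Icc] at hx ⊢; omega
  · intro x hx; ring
  · intro x hx; ring
  · intro x hx; rfl

section step
variable (w u : ℕ) (e : ℤ → ℕ)

lemma Tm_succ (hw : 0 < w) (hu : u ≤ w)
    (he : ∀ k : ℤ, (e k : ℤ) = (e (k-1) : ℤ) + w*k - u)
    (N : ℕ) (k : ℤ) (hk1 : -((N:ℤ)+1) ≤ k) (hk2 : k ≤ (N:ℤ)+1) :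
    Tm w e (N+1) k
      = (1 + PowerSeries.X ^ (w*(2*N+1))) * Tm w e N k
        + PowerSeries.X ^ (w*N + (w-u)) * Tm w e N (k-1)
        + PowerSeries.X ^ (w*N + u) * Tm w e N (k+1) := by
  have hcast : ((N+1 : ℕ) : ℤ) = (N:ℤ)+1 := by push_cast; ring
  have hExp := Bz_expand w hw ((N:ℤ)+k) ((N:ℤ)-k) (by omega) (by omega) (by omega)
  have h1 : PowerSeries.X ^ (e k) *
      ((1 + PowerSeries.X ^ (w*(((N:ℤ)+k)+((N:ℤ)-k)+1).toNat)) * Bz w ((N:ℤ)+k) ((N:ℤ)-k))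
      = (1 + PowerSeries.X ^ (w*(2*N+1))) * Tm w e N k := by
    rw [Tm, show ((((N:ℤ)+k)+((N:ℤ)-k)+1).toNat) = 2*N+1 by omega]
    ring
  have h2 : PowerSeries.X ^ (e k) *
      (PowerSeries.X ^ (w*(((N:ℤ)-k)+1).toNat) * Bz w (((N:ℤ)+k)-1) (((N:ℤ)-k)+1))
      = PowerSeries.X ^ (w*N + (w-u)) * Tm w e N (k-1) := by
    have hnn : (0:ℤ) ≤ (N:ℤ) - k + 1 := by omega
    have hexp : e k + w*((((N:ℤ)-k)+1).toNat) = (w*N+(w-u)) + e (k-1) := by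
      have hz : ((e k + w*((((N:ℤ)-k)+1).toNat) : ℕ) : ℤ)
          = (((w*N+(w-u)) + e (k-1) : ℕ) : ℤ) := by
        push_cast [Int.toNat_of_nonneg hnn, Nat.cast_sub hu]
        linear_combination he k
      exact_mod_cast hz
    rw [Tm, show (N:ℤ)+(k-1) = ((N:ℤ)+k)-1 by ring,
      show (N:ℤ)-(k-1) = ((N:ℤ)-k)+1 by ring,
      ← mul_assoc, ← pow_add, hexp, pow_add]
    ring
  have h3 : PowerSeries.X ^ (e k) *
      (PowerSeries.X ^ (w*(((N:ℤ)+k)+1).toNat) * Bz w (((N:ℤ)+k)+1) (((N:ℤ)-k)-1))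
      = PowerSeries.X ^ (w*N + u) * Tm w e N (k+1) := by
    have hnn : (0:ℤ) ≤ (N:ℤ) + k + 1 := by omega
    have hexp : e k + w*((((N:ℤ)+k)+1).toNat) = (w*N+u) + e (k+1) := by
      have hz : ((e k + w*((((N:ℤ)+k)+1).toNat) : ℕ) : ℤ)
          = (((w*N+u) + e (k+1) : ℕ) : ℤ) := by
        push_cast [Int.toNat_of_nonneg hnn]
        have h := he (k+1)
        rw [show k+1-1 = k by ring] at h
        linear_combination -h
      exact_mod_cast hz
    rw [Tm, show (N:ℤ)+(k+1) = ((N:ℤ)+k)+1 by ring,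
      show (N:ℤ)-(k+1) = ((N:ℤ)-k)-1 by ring,
      ← mul_assoc, ← pow_add, hexp, pow_add]
    ring
  rw [Tm, hcast, show (N:ℤ)+1+k = ((N:ℤ)+k)+1 by ring,
    show (N:ℤ)+1-k = ((N:ℤ)-k)+1 by ring, hExp]
  rw [mul_add, mul_add, h1, h2, h3]

lemma Rr_succ (hw : 0 < w) (hu : u ≤ w)
    (he : ∀ k : ℤ, (e k : ℤ) = (e (k-1) : ℤ) + w*k - u) (N : ℕ) :
    Rr w e (N+1)
      = (1 + PowerSeries.X ^ (w*(2*N+1)) + PowerSeries.X ^ (w*N + (w-u))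
          + PowerSeries.X ^ (w*N + u)) * Rr w e N := by
  have hcast : ((N+1 : ℕ) : ℤ) = (N:ℤ)+1 := by push_cast; ring
  rw [Rr, hcast]
  have hstep : ∀ k ∈ Finset.Icc (-((N:ℤ)+1)) ((N:ℤ)+1),
      Tm w e (N+1) k
        = (1 + PowerSeries.X ^ (w*(2*N+1))) * Tm w e N k
          + PowerSeries.X ^ (w*N + (w-u)) * Tm w e N (k-1)
          + PowerSeries.X ^ (w*N + u) * Tm w e N (k+1) := by
    intro k hk
    rw [Finset.mem_Icc] at hk
    exact Tm_succ w u e hw hu he N k hk.1 hk.2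
  rw [Finset.sum_congr rfl hstep]
  rw [Finset.sum_add_distrib, Finset.sum_add_distrib]
  rw [← Finset.mul_sum, ← Finset.mul_sum, ← Finset.mul_sum]
  have hA : ∑ k ∈ Finset.Icc (-((N:ℤ)+1)) ((N:ℤ)+1), Tm w e N k = Rr w e N :=
    sum_Tm_over w e N _ _ (by omega) (by omega)
  have hB : ∑ k ∈ Finset.Icc (-((N:ℤ)+1)) ((N:ℤ)+1), Tm w e N (k-1) = Rr w e N := by
    have := sum_shift (Tm w e N) (-((N:ℤ)+1)) ((N:ℤ)+1) (-1)
    simp only [show ∀ k : ℤ, k + (-1) = k - 1 from fun k => by ring] at this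
    rw [this]
    exact sum_Tm_over w e N _ _ (by omega) (by omega)
  have hC : ∑ k ∈ Finset.Icc (-((N:ℤ)+1)) ((N:ℤ)+1), Tm w e N (k+1) = Rr w e N := by
    rw [sum_shift (Tm w e N) (-((N:ℤ)+1)) ((N:ℤ)+1) 1]
    exact sum_Tm_over w e N _ _ (by omega) (by omega)
  rw [hA, hB, hC]
  ring

lemma Rr_zero (hw : 0 < w) (he0 : e 0 = 0) : Rr w e 0 = 1 := by
  rw [Rr]
  simp only [Nat.cast_zero, neg_zero, Finset.Icc_self, Finset.sum_singleton]
  rw [Tm, he0, pow_zero, one_mul, show ((0:ℕ):ℤ) + 0 = 0 by norm_num,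
    show ((0:ℕ):ℤ) - 0 = 0 by norm_num, Bz_of_nonneg w le_rfl le_rfl]
  exact BB_zero_left _ _ hw

/-- the closed product form of the bilateral sum -/
lemma Rr_prod (hw : 0 < w) (hu : u ≤ w)
    (he : ∀ k : ℤ, (e k : ℤ) = (e (k-1) : ℤ) + w*k - u) (he0 : e 0 = 0) (N : ℕ) :
    Rr w e N = ∏ j ∈ Finset.range N,
      (1 + PowerSeries.X ^ (w*(2*j+1)) + PowerSeries.X ^ (w*j + (w-u))
        + PowerSeries.X ^ (w*j + u)) := by
  induction N with
  | zero => rw [Rr_zero w e hw he0]; simp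
  | succ N ih =>
    rw [Finset.prod_range_succ, ← ih, Rr_succ w u e hw hu he N]
    ring
end step


lemma Dd_def (w m : ℕ) : Dd w m = ∏ j ∈ Finset.Icc 1 m, (1 - PowerSeries.X ^ (w*j)) := rfl
lemma Ii_def (w m : ℕ) : Ii w m = (Dd w m).invOfUnit 1 := rfl
lemma BB_def (w a b : ℕ) : BB w a b = Dd w (a+b) * (Ii w a * Ii w b) := rfl
lemma Tm_def (w : ℕ) (e : ℤ → ℕ) (N : ℕ) (k : ℤ) :
    Tm w e N k = PowerSeries.X ^ (e k) * Bz w ((N:ℤ)+k) ((N:ℤ)-k) := rfl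
lemma Rr_def (w : ℕ) (e : ℤ → ℕ) (N : ℕ) :
    Rr w e N = ∑ k ∈ Finset.Icc (-(N:ℤ)) (N:ℤ), Tm w e N k := rfl

lemma constantCoeff_E1 : PowerSeries.constantCoeff (E 1) = 1 := by simp [E]

/-- exponent functions -/
def tt (k : ℤ) : ℕ := (k*(k+1)/2).toNat
def se (k : ℤ) : ℕ := (k*k).toNat

lemma tt_spec (k : ℤ) : 2 * ((tt k : ℕ) : ℤ) = k*(k+1) := by
  obtain ⟨r, hr⟩ := Int.even_mul_succ_self k
  have h1 : 0 ≤ k*(k+1) := by nlinarith [sq_nonneg (2*k+1)]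
  have h2 : tt k = r.toNat := by
    rw [tt, hr, show r + r = 2*r by ring, Int.mul_ediv_cancel_left r (by norm_num)]
  rw [h2, hr]
  omega

lemma se_spec (k : ℤ) : ((se k : ℕ) : ℤ) = k*k := by
  rw [se, Int.toNat_of_nonneg (mul_self_nonneg k)]

lemma tt_he : ∀ k : ℤ, (tt k : ℤ) = (tt (k-1) : ℤ) + 1*k - 0 := by
  intro k
  have h1 := tt_spec k
  have h2 := tt_spec (k-1)
  have h3 : 2 * ((tt k : ℕ) : ℤ) - 2 * ((tt (k-1) : ℕ) : ℤ) = 2*k := by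
    linear_combination h1 - h2
  omega
lemma se_he : ∀ k : ℤ, (se k : ℤ) = (se (k-1) : ℤ) + 2*k - 1 := by
  intro k
  have h1 := se_spec k
  have h2 := se_spec (k-1)
  linear_combination h1 - h2

lemma tt_zero : tt 0 = 0 := rfl
lemma se_zero : se 0 = 0 := rfl

lemma tt_lower (k : ℤ) (n : ℕ) (h : tt k ≤ n) : -((n:ℤ)+1) ≤ k ∧ k ≤ (n:ℤ) := by
  have h1 := tt_spec k
  constructor <;> nlinarith [h1, (show ((tt k : ℕ):ℤ) ≤ (n:ℤ) by exact_mod_cast h)]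

lemma se_lower (k : ℤ) (n : ℕ) (h : se k ≤ n) : -((n:ℤ)+1) ≤ k ∧ k ≤ (n:ℤ) := by
  have h1 := se_spec k
  constructor <;> nlinarith [h1, (show ((se k : ℕ):ℤ) ≤ (n:ℤ) by exact_mod_cast h)]

open scoped Classical in
/-- theta series ψ -/
noncomputable def psi : Z :=
  PowerSeries.mk fun n => if ∃ a : ℕ, a*(a+1) = 2*n then 1 else 0

open scoped Classical in
/-- theta series S -/
noncomputable def Sth : Z :=
  PowerSeries.mk fun n => if n = 0 then 1 else if ∃ a : ℕ, a*a = n then 2 else 0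


lemma coeff_X_pow' (i e : ℕ) :
    PowerSeries.coeff i ((PowerSeries.X : Z) ^ e) = if e = i then 1 else 0 := by
  rw [PowerSeries.coeff_X_pow]
  by_cases h : i = e
  · rw [if_pos h, if_pos h.symm]
  · rw [if_neg h, if_neg (fun hh => h hh.symm)]

/-- coefficient of a finite sum of X-powers counts solutions -/
lemma coeff_sum_X_pow (e : ℤ → ℕ) (s : Finset ℤ) (i : ℕ) :
    PowerSeries.coeff i (∑ k ∈ s, (PowerSeries.X : Z) ^ (e k))
      = ((s.filter (fun k => e k = i)).card : ℤ) := by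
  rw [map_sum]
  rw [Finset.sum_congr rfl (fun k _ => coeff_X_pow' i (e k))]
  rw [Finset.sum_boole]

open scoped Classical in
lemma filter_tt (i N : ℕ) (hiN : i < N) :
    ((Finset.Icc (-(N:ℤ)) N).filter (fun k => tt k = i)).card
      = if ∃ a : ℕ, a*(a+1) = 2*i then 2 else 0 := by
  by_cases h : ∃ a : ℕ, a*(a+1) = 2*i
  · rw [if_pos h]
    obtain ⟨a, ha⟩ := h
    have haa : a ≤ i := by nlinarith [ha]
    have hset : (Finset.Icc (-(N:ℤ)) N).filter (fun k => tt k = i)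
        = {(a:ℤ), -1-(a:ℤ)} := by
      ext k
      simp only [Finset.mem_filter, Finset.mem_Icc, Finset.mem_insert,
        Finset.mem_singleton]
      constructor
      · rintro ⟨⟨hk1, hk2⟩, hk3⟩
        have h1 := tt_spec k
        rw [hk3] at h1
        have hZ : ((a:ℤ))*((a:ℤ)+1) = 2*(i:ℤ) := by exact_mod_cast ha
        have h2 : k*(k+1) = (a:ℤ)*((a:ℤ)+1) := by rw [hZ]; linarith [h1]
        have h3 : (k - a) * (k + a + 1) = 0 := by linear_combination h2
        rcases mul_eq_zero.mp h3 with h4 | h4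
        · left; omega
        · right; omega
      · rintro (rfl | rfl)
        · have h1 := tt_spec (a:ℤ)
          refine ⟨⟨by omega, by omega⟩, ?_⟩
          have : ((a*(a+1) : ℕ) : ℤ) = ((2*i : ℕ) : ℤ) := by exact_mod_cast ha
          push_cast at this
          omega
        · have h1 := tt_spec (-1-(a:ℤ))
          refine ⟨⟨by omega, by omega⟩, ?_⟩
          have h2 : (-1-(a:ℤ))*((-1-(a:ℤ))+1) = (a:ℤ)*((a:ℤ)+1) := by ring
          rw [h2] at h1
          have : ((a*(a+1) : ℕ) : ℤ) = ((2*i : ℕ) : ℤ) := by exact_mod_cast ha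
          push_cast at this
          omega
    rw [hset]
    rw [Finset.card_pair (by omega)]
  · rw [if_neg h]
    rw [Finset.card_eq_zero]
    rw [Finset.filter_eq_empty_iff]
    intro k _
    intro hk
    apply h
    have h1 := tt_spec k
    rw [hk] at h1
    rcases le_or_gt 0 k with hk0 | hk0
    · refine ⟨k.toNat, ?_⟩
      have : ((k.toNat * (k.toNat+1) : ℕ) : ℤ) = ((2*i : ℕ) : ℤ) := by
        push_cast [Int.toNat_of_nonneg hk0]
        linarith
      exact_mod_cast this
    · refine ⟨(-1-k).toNat, ?_⟩
      have h2 : (-1-k)*((-1-k)+1) = k*(k+1) := by ring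
      have : (((-1-k).toNat * ((-1-k).toNat+1) : ℕ) : ℤ) = ((2*i : ℕ) : ℤ) := by
        push_cast [Int.toNat_of_nonneg (by omega : (0:ℤ) ≤ -1-k)]
        linarith [h2]
      exact_mod_cast this

open scoped Classical in
lemma filter_se (i N : ℕ) (hiN : i < N) :
    (((Finset.Icc (-(N:ℤ)) N).filter (fun k => se k = i)).card : ℤ)
      = (if i = 0 then 1 else if ∃ a : ℕ, a*a = i then 2 else 0 : ℤ) := by
  by_cases h0 : i = 0
  · subst h0
    rw [if_pos rfl]
    have hset : (Finset.Icc (-(N:ℤ)) N).filter (fun k => se k = 0) = {0} := by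
      ext k
      simp only [Finset.mem_filter, Finset.mem_Icc, Finset.mem_singleton]
      constructor
      · rintro ⟨_, hk⟩
        have h1 := se_spec k
        rw [hk] at h1
        have h2 : k*k = 0 := by exact_mod_cast h1.symm
        exact mul_self_eq_zero.mp h2
      · rintro rfl
        exact ⟨⟨by omega, by omega⟩, rfl⟩
    rw [hset]
    simp
  · rw [if_neg h0]
    by_cases h : ∃ a : ℕ, a*a = i
    · rw [if_pos h]
      obtain ⟨a, ha⟩ := h
      have ha0 : 0 < a := by
        rcases Nat.eq_zero_or_pos a with rfl | hp
        · omega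
        · exact hp
      have haa : a ≤ i := by nlinarith [ha]
      have hset : (Finset.Icc (-(N:ℤ)) N).filter (fun k => se k = i)
          = {(a:ℤ), -(a:ℤ)} := by
        ext k
        simp only [Finset.mem_filter, Finset.mem_Icc, Finset.mem_insert,
          Finset.mem_singleton]
        constructor
        · rintro ⟨⟨hk1, hk2⟩, hk3⟩
          have h1 := se_spec k
          rw [hk3] at h1
          have h2 : k*k = (a:ℤ)*(a:ℤ) := by
            have : ((a*a : ℕ) : ℤ) = ((i:ℕ) : ℤ) := by exact_mod_cast ha
            push_cast at this
            linarith
          have h3 : (k - a) * (k + a) = 0 := by linear_combination h2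
          rcases mul_eq_zero.mp h3 with h4 | h4
          · left; omega
          · right; omega
        · rintro (rfl | rfl)
          · have h1 := se_spec (a:ℤ)
            refine ⟨⟨by omega, by omega⟩, ?_⟩
            have : ((a*a : ℕ) : ℤ) = ((i:ℕ) : ℤ) := by exact_mod_cast ha
            push_cast at this
            omega
          · have h1 := se_spec (-(a:ℤ))
            have h2 : (-(a:ℤ))*(-(a:ℤ)) = (a:ℤ)*(a:ℤ) := by ring
            rw [h2] at h1
            refine ⟨⟨by omega, by omega⟩, ?_⟩
            have : ((a*a : ℕ) : ℤ) = ((i:ℕ) : ℤ) := by exact_mod_cast ha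
            push_cast at this
            omega
      rw [hset, Finset.card_pair (by omega)]
      norm_num
    · rw [if_neg h]
      norm_cast
      rw [Finset.card_eq_zero, Finset.filter_eq_empty_iff]
      intro k _ hk
      apply h
      have h1 := se_spec k
      rw [hk] at h1
      refine ⟨k.natAbs, ?_⟩
      have h2 : ((k.natAbs * k.natAbs : ℕ) : ℤ) = (i : ℤ) := by
        rw [Int.natAbs_mul_self]
        linarith [h1]
      exact_mod_cast h2


lemma ceq_invOfUnit {n : ℕ} {f g : Z}
    (hf : PowerSeries.constantCoeff f = 1) (hg : PowerSeries.constantCoeff g = 1)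
    (h : ceq n f g) : ceq n (f.invOfUnit 1) (g.invOfUnit 1) := by
  have h1 : g * g.invOfUnit 1 = 1 := PowerSeries.mul_invOfUnit _ 1 (by simp [hg])
  have h2 : f * f.invOfUnit 1 = 1 := PowerSeries.mul_invOfUnit _ 1 (by simp [hf])
  have e1 : f.invOfUnit 1 = f.invOfUnit 1 * (g * g.invOfUnit 1) := by rw [h1, mul_one]
  have e2 : f.invOfUnit 1 * (f * g.invOfUnit 1) = g.invOfUnit 1 := by
    rw [show f.invOfUnit 1 * (f * g.invOfUnit 1) = (f * f.invOfUnit 1) * g.invOfUnit 1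
      by ring, h2, one_mul]
  intro i hi
  rw [e1]
  calc PowerSeries.coeff i (f.invOfUnit 1 * (g * g.invOfUnit 1))
      = PowerSeries.coeff i (f.invOfUnit 1 * (f * g.invOfUnit 1)) := by
        exact ((ceq.refl n (f.invOfUnit 1)).mul ((h.symm).mul
          (ceq.refl n (g.invOfUnit 1)))) i hi
  _ = PowerSeries.coeff i (g.invOfUnit 1) := by rw [e2]

lemma coeff_X_pow_mul_lt (f : Z) (e i : ℕ) (h : i < e) :
    PowerSeries.coeff i ((PowerSeries.X : Z) ^ e * f) = 0 := by
  rw [PowerSeries.coeff_mul]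
  apply Finset.sum_eq_zero
  intro p hp
  rw [Finset.HasAntidiagonal.mem_antidiagonal] at hp
  rw [PowerSeries.coeff_X_pow, if_neg (by omega)]
  ring

lemma ceq.sum {n : ℕ} {ι : Type*} (s : Finset ι) (f g : ι → Z)
    (h : ∀ k ∈ s, ceq n (f k) (g k)) :
    ceq n (∑ k ∈ s, f k) (∑ k ∈ s, g k) := by
  intro i hi
  rw [map_sum, map_sum]
  exact Finset.sum_congr rfl (fun k hk => h k hk i hi)

/-- binomial limit: all three indices large ⇒ `BB ≡ inverse of the full product` -/
lemma ceq_BB_lim {n : ℕ} (w a b : ℕ) (F : Z)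
    (hD : ∀ m : ℕ, n ≤ m → ceq n (Dd w m) F)
    (hDcc : ∀ m : ℕ, PowerSeries.constantCoeff (Dd w m) = 1)
    (hF : PowerSeries.constantCoeff F = 1)
    (ha : n ≤ a) (hb : n ≤ b) :
    ceq n (BB w a b) (F.invOfUnit 1) := by
  have hIa : ceq n (Ii w a) (F.invOfUnit 1) := by
    rw [Ii_def]
    exact ceq_invOfUnit (hDcc a) hF (hD a ha)
  have hIb : ceq n (Ii w b) (F.invOfUnit 1) := by
    rw [Ii_def]
    exact ceq_invOfUnit (hDcc b) hF (hD b hb)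
  have hDab : ceq n (Dd w (a+b)) F := hD (a+b) (by omega)
  have h1 : ceq n (BB w a b) (F * (F.invOfUnit 1 * F.invOfUnit 1)) := by
    rw [BB_def]
    exact hDab.mul (hIa.mul hIb)
  have h2 : F * (F.invOfUnit 1 * F.invOfUnit 1) = F.invOfUnit 1 := by
    rw [show F * (F.invOfUnit 1 * F.invOfUnit 1) = (F * F.invOfUnit 1) * F.invOfUnit 1
      by ring, PowerSeries.mul_invOfUnit _ 1 (by simp [hF]), one_mul]
  rw [h2] at h1
  exact h1

lemma ceq_Dd1 {n m : ℕ} (h : n ≤ m) : ceq n (Dd 1 m) (E 1) := by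
  rw [Dd_def]
  simp only [one_mul]
  exact (ceq_E1 h).symm

lemma ceq_Dd2 {n m : ℕ} (h : n ≤ m) : ceq n (Dd 2 m) (sq (E 1)) := by
  rw [Dd_def]
  exact (ceq_sqE1 h).symm

/-- shift products from `range N` to `Icc 1 N` -/
lemma prod_shift (f : ℕ → Z) (N : ℕ) :
    ∏ j ∈ Finset.range N, f (j+1) = ∏ j ∈ Finset.Icc 1 N, f j := by
  apply Finset.prod_nbij' (i := fun k => k+1) (j := fun k => k-1)
  · intro x hx; rw [Finset.mem_range] at hx; rw [Finset.mem_Icc]; omega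
  · intro x hx; rw [Finset.mem_Icc] at hx; rw [Finset.mem_range]; omega
  · intro x hx; omega
  · intro x hx; rw [Finset.mem_Icc] at hx; omega
  · intro x hx; rfl

lemma prod_range_two_mul (f : ℕ → Z) (N : ℕ) (hN : 0 < N) :
    ∏ j ∈ Finset.range N, f j = f 0 * ∏ j ∈ Finset.Icc 1 (N-1), f j := by
  have hs : Finset.Ico 1 N = Finset.Icc 1 (N-1) := by
    ext x
    rw [Finset.mem_Ico, Finset.mem_Icc]
    omega
  rw [Finset.range_eq_Ico, Finset.prod_eq_prod_Ico_succ_bot hN, hs]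

section lim1
-- the ψ instance : w = 1, u = 0, e = tt
lemma J1_sumside (n : ℕ) :
    ceq n (Rr 1 tt (2*n+2)) ((2*psi) * ((E 1).invOfUnit 1)) := by
  set N := 2*n+2 with hN
  have hterm : ∀ k ∈ Finset.Icc (-(N:ℤ)) N,
      ceq n (Tm 1 tt N k) (PowerSeries.X ^ (tt k) * ((E 1).invOfUnit 1)) := by
    intro k hk
    rw [Finset.mem_Icc] at hk
    rw [Tm_def]
    by_cases h : tt k ≤ n
    · obtain ⟨hk1, hk2⟩ := tt_lower k n h
      rw [Bz_of_nonneg 1 (by omega) (by omega)]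
      exact (ceq.refl n _).mul
        (ceq_BB_lim 1 _ _ (E 1) (fun m hm => ceq_Dd1 hm)
          (fun m => constantCoeff_Dd 1 m (by norm_num)) constantCoeff_E1
          (by omega) (by omega))
    · intro i hi
      rw [coeff_X_pow_mul_lt _ _ _ (by omega), coeff_X_pow_mul_lt _ _ _ (by omega)]
  have h1 : ceq n (Rr 1 tt N)
      (∑ k ∈ Finset.Icc (-(N:ℤ)) N, PowerSeries.X ^ (tt k) * ((E 1).invOfUnit 1)) := by
    rw [Rr_def]
    exact ceq.sum _ _ _ hterm
  rw [← Finset.sum_mul] at h1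
  apply h1.trans
  apply ceq.mul _ (ceq.refl n _)
  -- ∑ X^{tt k} ≡ 2 ψ
  intro i hi
  have hc : PowerSeries.coeff i ((2:Z)*psi)
      = (PowerSeries.coeff i psi) + (PowerSeries.coeff i psi) := by
    rw [show ((2:Z)*psi) = psi + psi by ring, map_add]
  rw [coeff_sum_X_pow, filter_tt i N (by omega), hc, psi, PowerSeries.coeff_mk]
  by_cases hx : ∃ a : ℕ, a*(a+1) = 2*i
  · rw [if_pos hx, if_pos hx]; norm_num
  · rw [if_neg hx, if_neg hx]; norm_num

end lim1


lemma J1_prodside (n : ℕ) :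
    ceq n (Rr 1 tt (2*n+2)) (2*(Pp*Pp)) := by
  have hfac : ∀ j ∈ Finset.range (2*n+2),
      (1 + (PowerSeries.X : Z) ^ (1*(2*j+1)) + PowerSeries.X ^ (1*j + (1-0))
        + PowerSeries.X ^ (1*j+0))
      = (1 + PowerSeries.X ^ j) * (1 + PowerSeries.X ^ (j+1)) := by
    intro j _
    ring
  have hL : Rr 1 tt (2*n+2)
      = 2 * ((∏ j ∈ Finset.Icc 1 (2*n+1), (1 + (PowerSeries.X:Z) ^ j))
          * (∏ j ∈ Finset.Icc 1 (2*n+2), (1 + (PowerSeries.X:Z) ^ j))) := by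
    rw [Rr_prod 1 0 tt (by norm_num) (by norm_num) tt_he tt_zero]
    rw [Finset.prod_congr rfl hfac]
    rw [Finset.prod_mul_distrib]
    rw [prod_range_two_mul (fun j => 1 + PowerSeries.X ^ j) (2*n+2) (by omega),
      prod_shift (fun j => 1 + PowerSeries.X ^ j) (2*n+2)]
    rw [show 2*n+2-1 = 2*n+1 by omega, pow_zero]
    ring
  rw [hL]
  exact (ceq.refl n 2).mul (((ceq_Pp (by omega)).symm).mul ((ceq_Pp (by omega)).symm))

/-- Gauss: ψ = ∏(1+Xʲ)² ∏(1-Xʲ) -/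
lemma psi_eq : Pp * Pp * E 1 = psi := by
  have h : (2:Z)*(Pp*Pp) = (2*psi) * ((E 1).invOfUnit 1) :=
    ceq_eq (fun n => ((J1_prodside n).symm).trans (J1_sumside n))
  have h2 : Pp*Pp = psi * ((E 1).invOfUnit 1) := by
    ext i
    have hx := congrArg (PowerSeries.coeff i) h
    rw [show (2:Z)*(Pp*Pp) = Pp*Pp + Pp*Pp by ring,
      show ((2:Z)*psi) * ((E 1).invOfUnit 1)
        = psi * ((E 1).invOfUnit 1) + psi * ((E 1).invOfUnit 1) by ring,
      map_add, map_add] at hx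
    omega
  rw [h2, mul_assoc, (E 1).invOfUnit_mul 1 (by simp [constantCoeff_E1]), mul_one]

lemma constantCoeff_sqE1 : PowerSeries.constantCoeff (sq (E 1)) = 1 := by
  rw [constantCoeff_sq, constantCoeff_E1]

lemma J2_sumside (n : ℕ) :
    ceq n (Rr 2 se (2*n+2)) (Sth * ((sq (E 1)).invOfUnit 1)) := by
  set N := 2*n+2 with hN
  have hterm : ∀ k ∈ Finset.Icc (-(N:ℤ)) N,
      ceq n (Tm 2 se N k) (PowerSeries.X ^ (se k) * ((sq (E 1)).invOfUnit 1)) := by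
    intro k hk
    rw [Finset.mem_Icc] at hk
    rw [Tm_def]
    by_cases h : se k ≤ n
    · obtain ⟨hk1, hk2⟩ := se_lower k n h
      rw [Bz_of_nonneg 2 (by omega) (by omega)]
      exact (ceq.refl n _).mul
        (ceq_BB_lim 2 _ _ (sq (E 1)) (fun m hm => ceq_Dd2 hm)
          (fun m => constantCoeff_Dd 2 m (by norm_num)) constantCoeff_sqE1
          (by omega) (by omega))
    · intro i hi
      rw [coeff_X_pow_mul_lt _ _ _ (by omega), coeff_X_pow_mul_lt _ _ _ (by omega)]
  have h1 : ceq n (Rr 2 se N)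
      (∑ k ∈ Finset.Icc (-(N:ℤ)) N,
        PowerSeries.X ^ (se k) * ((sq (E 1)).invOfUnit 1)) := by
    rw [Rr_def]
    exact ceq.sum _ _ _ hterm
  rw [← Finset.sum_mul] at h1
  apply h1.trans
  apply ceq.mul _ (ceq.refl n _)
  intro i hi
  rw [coeff_sum_X_pow, Sth, PowerSeries.coeff_mk]
  exact filter_se i N (by omega)

lemma J2_prodside (n : ℕ) :
    ceq n (Rr 2 se (2*n+2)) (Po*Po) := by
  have hfac : ∀ j ∈ Finset.range (2*n+2),
      (1 + (PowerSeries.X : Z) ^ (2*(2*j+1)) + PowerSeries.X ^ (2*j + (2-1))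
        + PowerSeries.X ^ (2*j+1))
      = (1 + PowerSeries.X ^ (2*(j+1)-1)) * (1 + PowerSeries.X ^ (2*(j+1)-1)) := by
    intro j _
    rw [show 2*(j+1)-1 = 2*j+1 by omega]
    ring
  have hL : Rr 2 se (2*n+2)
      = (∏ j ∈ Finset.Icc 1 (2*n+2), (1 + (PowerSeries.X:Z) ^ (2*j-1)))
        * (∏ j ∈ Finset.Icc 1 (2*n+2), (1 + (PowerSeries.X:Z) ^ (2*j-1))) := by
    rw [Rr_prod 2 1 se (by norm_num) (by norm_num) se_he se_zero]
    rw [Finset.prod_congr rfl hfac]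
    rw [Finset.prod_mul_distrib]
    rw [prod_shift (fun i => 1 + PowerSeries.X ^ (2*i-1)) (2*n+2)]
  rw [hL]
  exact ((ceq_Po (by omega)).symm).mul ((ceq_Po (by omega)).symm)

/-- Gauss: S = ∏(1+X^{2j-1})² ∏(1-X^{2j}) -/
lemma Sth_eq : Po * Po * sq (E 1) = Sth := by
  have h : Po*Po = Sth * ((sq (E 1)).invOfUnit 1) :=
    ceq_eq (fun n => ((J2_prodside n).symm).trans (J2_sumside n))
  rw [h, mul_assoc, (sq (E 1)).invOfUnit_mul 1 (by simp [constantCoeff_sqE1]), mul_one]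



open scoped Classical in
lemma coeff_psi (n : ℕ) :
    PowerSeries.coeff n psi = if ∃ a : ℕ, a*(a+1) = 2*n then 1 else 0 := by
  rw [psi, PowerSeries.coeff_mk]

open scoped Classical in
lemma coeff_Sth (n : ℕ) :
    PowerSeries.coeff n Sth
      = if n = 0 then 1 else if ∃ a : ℕ, a*a = n then 2 else 0 := by
  rw [Sth, PowerSeries.coeff_mk]

lemma G2 : sq (E 1) * sq (E 1) = psi * E 1 := by
  rw [← psi_eq, ← Pp_mul_E1]; ring

lemma iv_id : psi * psi = Sth * sq psi := by
  have h1 : sq psi = sq Pp * sq Pp * sq (E 1) := by rw [← psi_eq, sq_mul, sq_mul]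
  symm
  calc Sth * sq psi = (Po * Po * sq (E 1)) * (sq Pp * sq Pp * sq (E 1)) := by
        rw [← Sth_eq, h1]
  _ = ((Po * sq Pp) * (Po * sq Pp)) * (sq (E 1) * sq (E 1)) := by ring
  _ = (Pp * Pp) * (sq (E 1) * sq (E 1)) := by rw [← Pp_split]
  _ = (Pp * Pp) * ((Pp * E 1) * (Pp * E 1)) := by rw [Pp_mul_E1]
  _ = (Pp * Pp * E 1) * (Pp * Pp * E 1) := by ring
  _ = psi * psi := by rw [psi_eq]

lemma coeff_sq2 (f : Z) (m : ℕ) :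
    PowerSeries.coeff (4*m) (sq (sq f)) = PowerSeries.coeff m f := by
  rw [show 4*m = 2*(2*m) by ring, coeff_sq_even, coeff_sq_even]

lemma coeff_sq2_off (f : Z) (n : ℕ) (h : ¬ 4 ∣ n) :
    PowerSeries.coeff n (sq (sq f)) = 0 := by
  rcases Nat.even_or_odd n with ⟨m, hm⟩ | ⟨m, hm⟩
  · subst hm
    rw [show m + m = 2*m by ring, coeff_sq_even]
    exact coeff_sq_odd f m (by omega)
  · subst hm
    exact coeff_sq_odd _ _ (by omega)

lemma coeff_sq3 (f : Z) (m : ℕ) :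
    PowerSeries.coeff (8*m) (sq (sq (sq f))) = PowerSeries.coeff m f := by
  rw [show 8*m = 2*(4*m) by ring, coeff_sq_even, coeff_sq2]

lemma coeff_sq3_off (f : Z) (n : ℕ) (h : ¬ 8 ∣ n) :
    PowerSeries.coeff n (sq (sq (sq f))) = 0 := by
  rcases Nat.even_or_odd n with ⟨m, hm⟩ | ⟨m, hm⟩
  · subst hm
    rw [show m + m = 2*m by ring, coeff_sq_even]
    exact coeff_sq2_off _ m (by omega)
  · subst hm
    exact coeff_sq_odd _ _ (by omega)

lemma coeff_X_mul_zero (g : Z) : PowerSeries.coeff 0 (PowerSeries.X * g) = 0 := by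
  rw [PowerSeries.coeff_zero_eq_constantCoeff, map_mul, PowerSeries.constantCoeff_X,
    zero_mul]

/-- the 2-dissection of S (elementary): S = S(q⁴) + 2 q ψ(q⁸) -/
lemma C_dissect : Sth = sq (sq Sth) + 2 * (PowerSeries.X * sq (sq (sq psi))) := by
  ext n
  rw [map_add, show (2 : Z) * (PowerSeries.X * sq (sq (sq psi)))
      = PowerSeries.X * sq (sq (sq psi)) + PowerSeries.X * sq (sq (sq psi)) by ring,
    map_add]
  rcases Nat.eq_zero_or_pos n with rfl | hn
  · rw [coeff_X_mul_zero, coeff_Sth, if_pos rfl,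
      show (0:ℕ) = 4*0 by ring, coeff_sq2, coeff_Sth, if_pos rfl]
    norm_num
  obtain ⟨m, rfl⟩ : ∃ m, n = m + 1 := ⟨n - 1, by omega⟩
  rw [PowerSeries.coeff_succ_X_mul]
  by_cases h4 : 4 ∣ m + 1
  · obtain ⟨t, ht⟩ := h4
    have ht0 : ¬ (t = 0) := by omega
    rw [ht, coeff_sq2, coeff_sq3_off _ _ (by omega), coeff_Sth, coeff_Sth,
      if_neg (show ¬ (4*t = 0) by omega), if_neg ht0]
    have hiff : (∃ a : ℕ, a*a = 4*t) ↔ (∃ a : ℕ, a*a = t) := by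
      constructor
      · rintro ⟨a, ha⟩
        rcases Nat.even_or_odd a with ⟨c, hc⟩ | ⟨c, hc⟩
        · refine ⟨c, ?_⟩
          have h1 : a*a = 4*(c*c) := by rw [hc]; ring
          omega
        · exfalso
          have h1 : a*a = 4*(c*c+c)+1 := by rw [hc]; ring
          omega
      · rintro ⟨a, ha⟩
        refine ⟨2*a, ?_⟩
        have h1 : (2*a)*(2*a) = 4*(a*a) := by ring
        omega
    by_cases hsq : ∃ a : ℕ, a*a = t
    · rw [if_pos (hiff.mpr hsq), if_pos hsq]; ring
    · rw [if_neg (fun hh => hsq (hiff.mp hh)), if_neg hsq]; ring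
  · rw [coeff_sq2_off _ _ h4, coeff_Sth, if_neg (show ¬ (m+1 = 0) by omega)]
    by_cases h8 : 8 ∣ m
    · obtain ⟨t, ht⟩ := h8
      rw [ht, coeff_sq3, coeff_psi]
      have hiff : (∃ a : ℕ, a*a = 8*t+1) ↔ (∃ a : ℕ, a*(a+1) = 2*t) := by
        constructor
        · rintro ⟨a, ha⟩
          rcases Nat.even_or_odd a with ⟨c, hc⟩ | ⟨c, hc⟩
          · exfalso
            have h1 : a*a = 4*(c*c) := by rw [hc]; ring
            omega
          · refine ⟨c, ?_⟩
            have h1 : a*a = 4*(c*(c+1))+1 := by rw [hc]; ring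
            omega
        · rintro ⟨a, ha⟩
          refine ⟨2*a+1, ?_⟩
          have h1 : (2*a+1)*(2*a+1) = 4*(a*(a+1))+1 := by ring
          omega
      by_cases hsq : ∃ a : ℕ, a*(a+1) = 2*t
      · rw [if_pos (hiff.mpr hsq), if_pos hsq]
        norm_num
      · rw [if_neg (fun hh => hsq (hiff.mp hh)), if_neg hsq]
        ring
    · rw [coeff_sq3_off _ _ h8]
      have hns : ¬ ∃ a : ℕ, a*a = m+1 := by
        rintro ⟨a, ha⟩
        rcases Nat.even_or_odd a with ⟨c, hc⟩ | ⟨c, hc⟩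
        · have h1 : a*a = 4*(c*c) := by rw [hc]; ring
          omega
        · obtain ⟨d, hd⟩ : ∃ d, c*(c+1) = d + d := (Nat.even_mul_succ_self c)
          have h1 : a*a = 4*(c*(c+1))+1 := by rw [hc]; ring
          omega
      rw [if_neg hns]
      ring

/-- if f = -f(q²) then f = 0 -/
lemma neg_sq_fixpoint (f : Z) (h : f = -(sq f)) : f = 0 := by
  ext n
  induction n using Nat.strong_induction_on with
  | _ n ih =>
    have hn := congrArg (PowerSeries.coeff n) h
    rw [map_neg] at hn
    rw [map_zero]
    rcases Nat.even_or_odd n with ⟨m, hm⟩ | ⟨m, hm⟩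
    · subst hm
      rw [show m + m = 2*m by ring] at hn ⊢
      rw [coeff_sq_even] at hn
      rcases Nat.eq_zero_or_pos m with rfl | hm0
      · simp only [Nat.mul_zero] at hn ⊢
        omega
      · have h0 := ih m (by omega)
        rw [map_zero] at h0
        rw [hn, h0]
        ring
    · subst hm
      rw [coeff_sq_odd _ _ (by omega)] at hn
      omega

/-- the key quadratic dissection: S² = S(q²)² + 4 q ψ(q⁴)² -/
lemma iii_id : Sth * Sth = sq (Sth * Sth) + 4 * (PowerSeries.X * sq (sq (psi * psi))) := by
  have hAB : sq (sq (psi * psi)) = sq (sq Sth) * sq (sq (sq psi)) := by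
    rw [iv_id, sq_mul, sq_mul]
  have key : Sth * Sth - sq (Sth * Sth) - 4 * (PowerSeries.X * sq (sq (psi * psi)))
      = -(sq (Sth * Sth - sq (Sth * Sth) - 4 * (PowerSeries.X * sq (sq (psi * psi))))) := by
    have hsq : sq (Sth * Sth - sq (Sth * Sth) - 4 * (PowerSeries.X * sq (sq (psi * psi))))
        = sq (Sth * Sth) - sq (sq (Sth * Sth))
          - 4 * (sq PowerSeries.X * sq (sq (sq (psi * psi)))) := by
      rw [← sqHom_apply, map_sub, map_sub,
        show sqHom ((4:Z) * (PowerSeries.X * sq (sq (psi * psi))))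
          = 4 * (sqHom PowerSeries.X * sqHom (sq (sq (psi * psi)))) from by
            rw [map_mul, map_mul, map_ofNat]]
      simp only [sqHom_apply]
    rw [hsq]
    have h1 : sq (sq (Sth * Sth)) = sq (sq Sth) * sq (sq Sth) := by
      rw [sq_mul, sq_mul]
    have h2 : sq (sq (sq (psi * psi))) = sq (sq (sq psi)) * sq (sq (sq psi)) := by
      rw [sq_mul, sq_mul, sq_mul]
    have hC := C_dissect
    rw [h1, h2, hAB, sq_X]
    generalize hW : sq (Sth * Sth) = W
    generalize hA : sq (sq Sth) = A at hC ⊢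
    generalize hP : sq (sq (sq psi)) = P at hC ⊢
    rw [hC]
    ring
  have hzero := neg_sq_fixpoint _ key
  linear_combination hzero


lemma sq_pow (f : Z) (k : ℕ) : sq (f ^ k) = (sq f) ^ k := by
  rw [← sqHom_apply, map_pow, sqHom_apply]

lemma hiv2 : psi^2 = Sth * sq psi := by
  rw [pow_two]; exact iv_id

lemma hS2 : Sth^2 = (sq Sth)^2 + 4 * (PowerSeries.X * (sq (sq psi))^2) := by
  have h := iii_id
  simp only [sq_mul] at h
  linear_combination h

lemma hps (m : ℕ) : psi^(2*m) = Sth^m * (sq psi)^m := by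
  rw [pow_mul, hiv2, mul_pow]

lemma coeff_X_pow_mul2 (h : Z) (j n : ℕ) (hj : j ≤ n) :
    PowerSeries.coeff n ((PowerSeries.X : Z)^j * h) = PowerSeries.coeff (n-j) h := by
  rw [PowerSeries.coeff_X_pow_mul', if_pos hj]

/-- coefficient of `X^j * sq h` vanishes when parities of `n` and `j` differ -/
lemma coeff_Xj_sq_zero (h : Z) (j n : ℕ) (hpar : ¬ 2 ∣ (n + j)) :
    PowerSeries.coeff n ((PowerSeries.X : Z)^j * sq h) = 0 := by
  rcases le_or_gt j n with hj | hj
  · rw [coeff_X_pow_mul2 _ _ _ hj]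
    exact coeff_sq_odd _ _ (by omega)
  · exact coeff_X_pow_mul_lt _ _ _ hj

lemma coeff_C_mul' (a : ℤ) (f : Z) (n : ℕ) :
    PowerSeries.coeff n ((PowerSeries.C a) * f) = a * PowerSeries.coeff n f :=
  PowerSeries.coeff_C_mul _ _ _

/-- generic term rewriting for the binomial expansion of `((sq Sth)^2 + 4(X P₂²))^K` -/
lemma term_form (m j c : ℕ) (g : Z) :
    ((sq Sth)^2)^m * (4 * (PowerSeries.X * (sq (sq psi))^2))^j * (c : Z) * sq g
      = (PowerSeries.C ((c : ℤ) * 4^j)) *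
          ((PowerSeries.X : Z)^j * sq (Sth^(2*m) * (sq psi)^(2*j) * g)) := by
  have hC : (PowerSeries.C ((c : ℤ) * 4^j)) = (c : Z) * 4^j := by
    rw [map_mul, map_pow, map_natCast, map_ofNat]
  rw [hC]
  simp only [sq_mul, sq_pow]
  ring

/-- second level: 64 divides odd coefficients of Sth³² · (anything)(q²)  -/
lemma lvl2 (n : ℕ) (hn : ¬ 2 ∣ n) (g : Z) :
    (64:ℤ) ∣ PowerSeries.coeff n (Sth^32 * sq g) := by
  rw [show Sth^32 = (Sth^2)^16 by rw [← pow_mul], hS2, add_pow, Finset.sum_mul, map_sum]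
  apply Finset.dvd_sum
  intro m hm
  rw [Finset.mem_range] at hm
  rw [term_form m (16-m) (Nat.choose 16 m) g, coeff_C_mul']
  rcases Nat.even_or_odd (16 - m) with ⟨t, ht⟩ | ⟨t, ht⟩
  · -- even j : coefficient vanishes
    rw [coeff_Xj_sq_zero _ _ _ (by omega)]
    exact Dvd.intro 0 (by ring)
  · -- odd j : the numerical factor is divisible by 64
    apply Dvd.dvd.mul_right
    rcases Nat.eq_or_lt_of_le (show 1 ≤ 16 - m by omega) with h1 | h1
    · -- j = 1, m = 15 : choose 16 15 = 16, 16·4 = 64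
      rw [← h1, show m = 15 by omega, show Nat.choose 16 15 = 16 from by decide]
      norm_num
    · -- j ≥ 3
      have h3 : 3 ≤ 16 - m := by omega
      have h64 : (64:ℤ) ∣ 4^(16-m) := by
        have h' : (4:ℤ)^3 ∣ 4^(16-m) := pow_dvd_pow 4 h3
        norm_num at h'
        exact h'
      exact dvd_mul_of_dvd_right h64 _
/-- first level: 256 divides coefficients ≡ 3 mod 4 of Sth¹² ψ⁴⁴(q²) -/
lemma lvl1 (n : ℕ) (hn : n % 4 = 3) :
    (256:ℤ) ∣ PowerSeries.coeff n (Sth^12 * sq (psi^44)) := by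
  rw [show Sth^12 = (Sth^2)^6 by rw [← pow_mul], hS2, add_pow, Finset.sum_mul, map_sum]
  apply Finset.dvd_sum
  intro m hm
  rw [Finset.mem_range] at hm
  rw [term_form m (6-m) (Nat.choose 6 m) (psi^44), coeff_C_mul']
  rcases Nat.even_or_odd (6 - m) with ⟨t, ht⟩ | ⟨t, ht⟩
  · rw [coeff_Xj_sq_zero _ _ _ (by omega)]
    exact Dvd.intro 0 (by ring)
  · -- odd j ∈ {1,3,5}
    have hj : 6 - m = 1 ∨ 6 - m = 3 ∨ 6 - m = 5 := by omega
    rcases hj with hj | hj | hj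
    · -- j = 1, m = 5 : factor 24, recurse
      have hm5 : m = 5 := by omega
      subst hm5
      rw [hj]
      have hinner : Sth^(2*5) * (sq psi)^(2*1) * psi^44 = Sth^32 * sq (psi^24) := by
        have h44 := hps 22
        norm_num at h44
        rw [h44, sq_pow]
        ring
      rw [hinner]
      set d := (n-1)/2 with hd0
      have hc : PowerSeries.coeff n ((PowerSeries.X : Z)^1 * sq (Sth^32 * sq (psi^24)))
          = PowerSeries.coeff d (Sth^32 * sq (psi^24)) := by
        rw [coeff_X_pow_mul2 _ _ _ (by omega)]
        rw [show n - 1 = 2 * d by omega, coeff_sq_even]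
      rw [hc]
      obtain ⟨k, hk⟩ := lvl2 d (by omega) (psi^24)
      rw [hk]
      refine ⟨6 * k, ?_⟩
      rw [show Nat.choose 6 5 = 6 from by decide]
      push_cast
      ring
    · -- j = 3 : factor 20·64 = 1280
      have hm3 : m = 3 := by omega
      subst hm3
      rw [hj]
      apply Dvd.dvd.mul_right
      rw [show Nat.choose 6 3 = 20 from by decide]
      norm_num
    · -- j = 5 : factor 6·4⁵ = 6144
      have hm1 : m = 1 := by omega
      subst hm1
      rw [hj]
      apply Dvd.dvd.mul_right
      rw [show Nat.choose 6 1 = 6 from by decide]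
      norm_num


lemma hS4 : Sth^4 = (sq Sth)^4 + 8*(PowerSeries.X*((sq (sq psi))^2*(sq Sth)^2))
    + 16*(PowerSeries.X^2*(sq (sq psi))^4) := by
  linear_combination (Sth^2 + (sq Sth)^2 + 4*(PowerSeries.X*(sq (sq psi))^2)) * hS2

lemma main_comb (u : ℕ) :
    (2048:ℤ) ∣ PowerSeries.coeff (8*u+7) (psi^8 * sq (psi^16) * sq (sq (psi^32))) := by
  have h8 : psi^8 = Sth^4 * (sq psi)^4 := by
    have h := hps 4
    norm_num at h
    exact h
  have hFexp : psi^8 * sq (psi^16) * sq (sq (psi^32))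
      = sq (Sth^4 * psi^20 * (sq psi)^32)
        + 8 * (PowerSeries.X^1 * sq (Sth^2 * psi^20 * (sq psi)^34))
        + 16 * (PowerSeries.X^2 * sq (psi^20 * (sq psi)^36)) := by
    rw [h8]
    simp only [sq_mul, sq_pow]
    linear_combination ((sq psi)^20 * (sq (sq psi))^32) * hS4
  rw [hFexp, map_add, map_add]
  have hc0 : PowerSeries.coeff (8*u+7) (sq (Sth^4 * psi^20 * (sq psi)^32)) = 0 :=
    coeff_sq_odd _ _ (by omega)
  have hc2 : PowerSeries.coeff (8*u+7)
      ((16:Z) * (PowerSeries.X^2 * sq (psi^20 * (sq psi)^36))) = 0 := by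
    rw [show (16:Z) = PowerSeries.C 16 from by rw [map_ofNat], coeff_C_mul',
      coeff_Xj_sq_zero _ _ _ (by omega)]
    ring
  have hc1 : PowerSeries.coeff (8*u+7)
      ((8:Z) * (PowerSeries.X^1 * sq (Sth^2 * psi^20 * (sq psi)^34)))
      = 8 * PowerSeries.coeff (4*u+3) (Sth^2 * psi^20 * (sq psi)^34) := by
    rw [show (8:Z) = PowerSeries.C 8 from by rw [map_ofNat], coeff_C_mul',
      coeff_X_pow_mul2 _ _ _ (by omega),
      show 8*u+7-1 = 2*(4*u+3) by omega, coeff_sq_even]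
  rw [hc0, hc1, hc2]
  have hA1 : Sth^2 * psi^20 * (sq psi)^34 = Sth^12 * sq (psi^44) := by
    have h20 := hps 10
    norm_num at h20
    rw [h20, sq_pow]
    ring
  rw [hA1]
  obtain ⟨k, hk⟩ := lvl1 (4*u+3) (by omega)
  rw [hk]
  exact ⟨k, by ring⟩


noncomputable def S2u : (PowerSeries ℤ)ˣ := Units.map sqHom.toMonoidHom E1unit

lemma S2u_val : (S2u : Z) = sq (E 1) := by
  rw [S2u, Units.coe_map]
  exact sqHom_apply _

lemma S2u_inv_val : ((S2u⁻¹ : (PowerSeries ℤ)ˣ) : Z) = sq ((E1unit⁻¹ : (PowerSeries ℤ)ˣ) : Z) := by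
  rw [S2u, ← map_inv (Units.map sqHom.toMonoidHom) E1unit, Units.coe_map]
  exact sqHom_apply _

lemma inv_val_eq : ((E1unit⁻¹ : (PowerSeries ℤ)ˣ) : Z)
    = psi * (((S2u⁻¹ : (PowerSeries ℤ)ˣ) : Z) * ((S2u⁻¹ : (PowerSeries ℤ)ˣ) : Z)) := by
  have ha : (S2u : Z) * ((S2u⁻¹ : (PowerSeries ℤ)ˣ) : Z) = 1 := Units.mul_inv S2u
  have hb : (E1unit : Z) * ((E1unit⁻¹ : (PowerSeries ℤ)ˣ) : Z) = 1 := Units.mul_inv E1unit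
  have hc : psi = (S2u : Z) * (S2u : Z) * ((E1unit⁻¹ : (PowerSeries ℤ)ˣ) : Z) := by
    calc psi = psi * ((E1unit : Z) * ((E1unit⁻¹ : (PowerSeries ℤ)ˣ) : Z)) := by
          rw [hb, mul_one]
    _ = (psi * E 1) * ((E1unit⁻¹ : (PowerSeries ℤ)ˣ) : Z) := by
          rw [show (E1unit : Z) = E 1 from rfl]; ring
    _ = (sq (E 1) * sq (E 1)) * ((E1unit⁻¹ : (PowerSeries ℤ)ˣ) : Z) := by rw [G2]
    _ = (S2u : Z) * (S2u : Z) * ((E1unit⁻¹ : (PowerSeries ℤ)ˣ) : Z) := by rw [S2u_val]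
  calc ((E1unit⁻¹ : (PowerSeries ℤ)ˣ) : Z)
      = ((S2u : Z) * ((S2u⁻¹ : (PowerSeries ℤ)ˣ) : Z))
        * ((S2u : Z) * ((S2u⁻¹ : (PowerSeries ℤ)ˣ) : Z))
        * ((E1unit⁻¹ : (PowerSeries ℤ)ˣ) : Z) := by rw [ha]; ring
  _ = ((S2u : Z) * (S2u : Z) * ((E1unit⁻¹ : (PowerSeries ℤ)ˣ) : Z))
        * (((S2u⁻¹ : (PowerSeries ℤ)ˣ) : Z) * ((S2u⁻¹ : (PowerSeries ℤ)ˣ) : Z)) := by ring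
  _ = psi * (((S2u⁻¹ : (PowerSeries ℤ)ˣ) : Z) * ((S2u⁻¹ : (PowerSeries ℤ)ˣ) : Z)) := by
        rw [← hc]

lemma inv_pow_step (k : ℕ) :
    ((E1unit⁻¹ : (PowerSeries ℤ)ˣ) : Z)^k
      = psi^k * sq (((E1unit⁻¹ : (PowerSeries ℤ)ˣ) : Z)^(2*k)) := by
  calc ((E1unit⁻¹ : (PowerSeries ℤ)ˣ) : Z)^k
      = (psi * (((S2u⁻¹ : (PowerSeries ℤ)ˣ) : Z) * ((S2u⁻¹ : (PowerSeries ℤ)ˣ) : Z)))^k := by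
        rw [← inv_val_eq]
  _ = psi^k * (((S2u⁻¹ : (PowerSeries ℤ)ˣ) : Z)^2)^k := by
        rw [mul_pow, ← pow_two]
  _ = psi^k * ((S2u⁻¹ : (PowerSeries ℤ)ˣ) : Z)^(2*k) := by rw [← pow_mul]
  _ = psi^k * sq (((E1unit⁻¹ : (PowerSeries ℤ)ˣ) : Z)^(2*k)) := by
        rw [S2u_inv_val, ← sq_pow]

lemma inv8_val :
    (((E1unit⁻¹ : (PowerSeries ℤ)ˣ) : Z))^8
      = psi^8 * sq (psi^16) * sq (sq (psi^32))
        * sq (sq (sq (((E1unit⁻¹ : (PowerSeries ℤ)ˣ) : Z)^64))) := by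
  rw [inv_pow_step 8, show 2*8 = 16 from by norm_num,
    inv_pow_step 16, show 2*16 = 32 from by norm_num,
    inv_pow_step 32, show 2*32 = 64 from by norm_num]
  simp only [sq_mul]
  ring

theorem pneg8 (n : ℕ) : (2048 : ℤ) ∣ pr (-8) (8 * n + 7) := by
  have hz : (E1unit ^ (-8 : ℤ) : (PowerSeries ℤ)ˣ) = (E1unit⁻¹)^8 := by
    rw [show (-8:ℤ) = -((8:ℕ):ℤ) from by norm_num, zpow_neg, zpow_natCast, ← inv_pow]
  rw [pr, hz, Units.val_pow_eq_pow_val, inv8_val, PowerSeries.coeff_mul]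
  apply Finset.dvd_sum
  intro p hp
  rw [Finset.HasAntidiagonal.mem_antidiagonal] at hp
  by_cases h8 : 8 ∣ p.2
  · obtain ⟨v, hv⟩ : ∃ v, p.1 = 8*v+7 := ⟨p.1/8, by omega⟩
    rw [hv]
    exact (main_comb v).mul_right _
  · rw [coeff_sq3_off _ _ h8, mul_zero]
    exact dvd_zero _


end JTP

theorem pneg8_8n7_congruence (n : ℕ) :
    (2048 : ℤ) ∣ pr (-8) (8 * n + 7) := JTP.pneg8 n
end

section
/- For every positive integer N with N ≡ 0, 3, 5, or 6 (mod 7), the Ramanujan tau function satisfies τ(N) ≡ 0 (mod 7). -/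
section Tau7Private
open Polynomial Finset

noncomputable def Epriv (k : ℕ) : PowerSeries ℤ :=
  PowerSeries.mk fun n =>
    PowerSeries.coeff n
      (∏ m ∈ Finset.Icc 1 n, (1 - (PowerSeries.X : PowerSeries ℤ) ^ (k * m)))

noncomputable def tauPriv (n : ℕ) : ℤ :=
  PowerSeries.coeff (n - 1) ((Epriv 1) ^ 24)


namespace Tau7

/-- triangular number -/
def T (k : ℕ) : ℕ := k * (k + 1) / 2

lemma T_two (k : ℕ) : 2 * T k = k * (k + 1) := by
  rw [T, Nat.mul_div_cancel' (Nat.even_mul_succ_self k).two_dvd]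

lemma T_succ (k : ℕ) : T (k + 1) = T k + (k + 1) := by
  have h1 := T_two k
  have h2 := T_two (k + 1)
  have h3 : (k+1) * (k+1+1) = k * (k+1) + 2 * (k+1) := by ring
  omega

/-- T' N = N(N-1)/2 -/
def T' (k : ℕ) : ℕ := k * (k - 1) / 2

lemma T'_succ (k : ℕ) : T' (k + 1) = T' k + k := by
  rcases k with _ | k
  · simp [T']
  · show (k+2) * (k+1) / 2 = (k+1) * k / 2 + (k+1)
    have h1 : 2 ∣ (k+1) * k := by simpa [Nat.mul_comm] using (Nat.even_mul_succ_self k).two_dvd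
    have h2 : 2 ∣ (k+2) * (k+1) := by simpa [Nat.mul_comm] using (Nat.even_mul_succ_self (k+1)).two_dvd
    have e1 := Nat.mul_div_cancel' h1
    have e2 := Nat.mul_div_cancel' h2
    have h3 : (k+2) * (k+1) = (k+1) * k + 2 * (k+1) := by ring
    omega

/-- exponent in the finite Jacobi triple product -/
def e (N k : ℕ) : ℕ := T k + T' N + N * (2 * N - k)

/-- Gaussian binomial coefficient as a polynomial in `X` over `ℤ`. -/
noncomputable def gb : ℕ → ℕ → Polynomial ℤ
  | _, 0 => 1
  | 0, _ + 1 => 0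
  | n + 1, k + 1 => gb n k + X ^ (k + 1) * gb n (k + 1)

@[simp] lemma gb_zero_right (n : ℕ) : gb n 0 = 1 := by cases n <;> rfl

lemma gb_succ_succ (n k : ℕ) :
    gb (n + 1) (k + 1) = gb n k + X ^ (k + 1) * gb n (k + 1) := by
  rw [gb]

lemma gb_eq_zero : ∀ n k : ℕ, n < k → gb n k = 0
  | _, 0, h => absurd h (Nat.not_lt_zero _)
  | 0, k + 1, _ => rfl
  | n + 1, k + 1, h => by
      rw [gb_succ_succ, gb_eq_zero n k (by omega), gb_eq_zero n (k+1) (by omega)]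
      ring

@[simp] lemma gb_diag : ∀ n : ℕ, gb n n = 1
  | 0 => rfl
  | n + 1 => by rw [gb_succ_succ, gb_diag n, gb_eq_zero n (n+1) (by omega)]; ring

/-- the second Pascal rule -/
lemma gb_pascal2 : ∀ n k : ℕ, gb (n + 1) (k + 1) = X ^ (n - k) * gb n k + gb n (k + 1)
  | 0, 0 => by simp [gb_succ_succ, gb_eq_zero 0 1 (by norm_num)]
  | 0, k + 1 => by
      simp [gb_succ_succ, gb_eq_zero 0 (k+1) (by omega), gb_eq_zero 0 (k+2) (by omega)]
  | n + 1, 0 => by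
      have h1 := gb_succ_succ (n + 1) 0
      have h2 := gb_succ_succ n 0
      have h3 := gb_pascal2 n 0
      simp only [gb_zero_right, Nat.sub_zero, mul_one, pow_zero, one_mul] at *
      rw [h1]
      linear_combination (X : Polynomial ℤ) * h3 - h2
  | n + 1, k + 1 => by
      rcases le_or_gt (k + 1) n with hk1 | hk1
      · have hpow1 : (X : Polynomial ℤ) ^ (k+2) * X ^ (n-(k+1)) = X ^ (n+1) := by
          rw [← pow_add]; congr 1; omega
        have hpow2 : (X : Polynomial ℤ) ^ (n-k) * X ^ (k+1) = X ^ (n+1) := by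
          rw [← pow_add]; congr 1; omega
        have key : gb (n+2) (k+2)
            = X^(n-k) * gb n k + gb n (k+1) + X^(n+1) * gb n (k+1) + X^(k+2) * gb n (k+2) := by
          rw [gb_succ_succ (n+1) (k+1), gb_pascal2 n k, gb_pascal2 n (k+1)]
          linear_combination (gb n (k+1)) * hpow1
        have key2 : X^((n+1)-(k+1)) * gb (n+1) (k+1) + gb (n+1) (k+2)
            = X^(n-k) * gb n k + gb n (k+1) + X^(n+1) * gb n (k+1) + X^(k+2) * gb n (k+2) := by
          rw [show (n+1)-(k+1) = n-k from by omega, gb_succ_succ n k, gb_succ_succ n (k+1)]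
          linear_combination (gb n (k+1)) * hpow2
        rw [key, key2]
      · rcases Nat.lt_or_ge n k with hlt | hge
        · rw [gb_eq_zero (n+2) (k+2) (by omega), gb_eq_zero (n+1) (k+1) (by omega),
            gb_eq_zero (n+1) (k+2) (by omega)]
          ring
        · have hnk : n = k := by omega
          subst hnk
          rw [gb_eq_zero (n+1) (n+2) (by omega), gb_diag (n+2),
            show (n+1)-(n+1) = 0 from by omega, pow_zero, gb_diag (n+1)]
          ring

end Tau7

namespace Tau7b
open Tau7

/-- product formula for Gaussian binomials -/
lemma gb_prod : ∀ n k : ℕ, k ≤ n →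
    gb n k * ∏ m ∈ Icc 1 k, (1 - (X : Polynomial ℤ) ^ m)
      = ∏ m ∈ Icc (n - k + 1) n, (1 - (X : Polynomial ℤ) ^ m)
  | 0, 0, _ => by simp
  | 0, k + 1, h => by omega
  | n + 1, 0, _ => by
      simp [show Icc (n + 2) (n + 1) = ∅ from Icc_eq_empty (by omega)]
  | n + 1, k + 1, h => by
      have hk : k ≤ n := by omega
      have ih1 := gb_prod n k hk
      rw [gb_succ_succ, add_mul, prod_Icc_succ_top (show 1 ≤ k + 1 by omega)]
      rw [show (n + 1) - (k + 1) = n - k from by omega]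
      rw [← Finset.insert_Icc_right_eq_Icc_add_one (show n - k + 1 ≤ n + 1 by omega),
        Finset.prod_insert (by simp)]
      rcases le_or_gt (k + 1) n with hk1 | hk1
      · have ih2 := gb_prod n (k + 1) hk1
        rw [prod_Icc_succ_top (show 1 ≤ k + 1 by omega)] at ih2
        have hbot : ∏ m ∈ Icc (n - (k+1) + 1) n, (1 - (X : Polynomial ℤ) ^ m)
            = (1 - X ^ (n - k)) * ∏ m ∈ Icc (n - k + 1) n, (1 - (X : Polynomial ℤ) ^ m) := by
          rw [show n - (k+1) + 1 = n - k from by omega,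
            ← Finset.insert_Icc_add_one_left_eq_Icc (show n - k ≤ n from by omega),
            Finset.prod_insert (by simp)]
        rw [hbot] at ih2
        have hpow : (X : Polynomial ℤ)^(k+1) * X^(n-k) = X^(n+1) := by
          rw [← pow_add]; congr 1; omega
        linear_combination (1 - X^(k+1)) * ih1
          + X^(k+1) * ih2
          - (∏ m ∈ Icc (n - k + 1) n, (1 - (X : Polynomial ℤ) ^ m)) * hpow
      · have hkn : k = n := by omega
        subst hkn
        rw [gb_eq_zero k (k+1) (by omega)]
        rw [show k - k + 1 = 1 from by omega] at ih1 ⊢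
        linear_combination (1 - X^(k+1)) * ih1

end Tau7b

namespace Tau7c
open Tau7 Tau7b

lemma E1 (N k : ℕ) (hk : k ≤ 2*N) :
    e (N+1) (k+2) + (2*N - k) = e N k + (5*N+3) := by
  unfold e
  rw [T_succ, T_succ, T'_succ]
  have h1 : 2*(N+1) - (k+2) = 2*N - k := by omega
  rw [h1]
  have h2 : (N+1) * (2*N-k) = N*(2*N-k) + (2*N-k) := by ring
  rw [h2]
  omega

lemma E2 (N k : ℕ) (hk : k ≤ 2*N) :
    e (N+1) (k+1) = e N k + (4*N+2) := by
  unfold e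
  rw [T_succ, T'_succ]
  have h1 : 2*(N+1) - (k+1) = (2*N - k) + 1 := by omega
  rw [h1]
  have h2 : (N+1) * ((2*N-k)+1) = N*(2*N-k) + (2*N-k) + N + 1 := by ring
  rw [h2]
  omega

lemma E3 (N k : ℕ) (hk : k ≤ 2*N) :
    e (N+1) k + k = e N k + (5*N+2) := by
  unfold e
  rw [T'_succ]
  have h1 : 2*(N+1) - k = (2*N - k) + 2 := by omega
  rw [h1]
  have h2 : (N+1) * ((2*N-k)+2) = N*(2*N-k) + (2*N-k) + 2*N + 2 := by ring
  rw [h2]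
  omega

/-- the mixed double-Pascal rule -/
lemma gb_star (N j : ℕ) (hj : j ≤ 2*N) :
    gb (2*N+2) (j+2) = X^(2*N-j) * gb (2*N) j + (1 + X^(2*N+1)) * gb (2*N) (j+1)
      + X^(j+2) * gb (2*N) (j+2) := by
  rw [gb_succ_succ (2*N+1) (j+1), gb_pascal2 (2*N) j, gb_pascal2 (2*N) (j+1)]
  rcases lt_or_ge j (2*N) with hlt | hge
  · have hpow : (X : Polynomial ℤ)^(j+2) * X^(2*N-(j+1)) = X^(2*N+1) := by
      rw [← pow_add]; congr 1; omega
    linear_combination (gb (2*N) (j+1)) * hpow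
  · have hj2 : j = 2*N := by omega
    subst hj2
    rw [gb_eq_zero (2*N) (2*N+1) (by omega)]
    ring

lemma gb_one (m : ℕ) : gb (m+2) 1 = 1 + X^(m+1) + X * gb m 1 := by
  rw [gb_succ_succ (m+1) 0, gb_pascal2 m 0]
  simp only [gb_zero_right, mul_one, Nat.sub_zero]
  ring

/-- coefficient polys for the triple product sums -/
noncomputable def aJ (N k : ℕ) : Polynomial ℤ := (-1)^(N+k) * X^(e N k) * gb (2*N) k

noncomputable def fJ (N k : ℕ) : Polynomial (Polynomial ℤ) := C (aJ N k) * X^k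

noncomputable def gA (N k : ℕ) : Polynomial (Polynomial ℤ) :=
  C ((-1)^(N+1+k) * X^(5*N+3+e N k) * gb (2*N) k) * X^(k+2)

noncomputable def gG (N k : ℕ) : Polynomial (Polynomial ℤ) :=
  C ((-1)^(N+k) * (X^(4*N+2+e N k) + X^(6*N+3+e N k)) * gb (2*N) k) * X^(k+1)

noncomputable def gH (N k : ℕ) : Polynomial (Polynomial ℤ) :=
  C ((-1)^(N+1+k) * X^(5*N+2+e N k) * gb (2*N) k) * X^k

lemma L1 (N k : ℕ) :
    C ((X:Polynomial ℤ)^(4*N+2)) * ((1 - C ((X:Polynomial ℤ)^(N+1)) * X) * (X - C ((X:Polynomial ℤ)^N)))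
        * fJ N k
      = gA N k + gG N k + gH N k := by
  unfold fJ aJ gA gG gH
  simp only [map_mul, map_add, map_pow, map_neg, map_one]
  ring

end Tau7c

namespace Tau7d
open Tau7 Tau7b Tau7c

lemma E2' (N j : ℕ) (hj : j + 1 ≤ 2*N) : e (N+1) (j+2) = e N (j+1) + (4*N+2) := by
  have h := E2 N (j+1) hj
  rwa [show j+1+1 = j+2 from rfl] at h

lemma E2'' (N : ℕ) : e (N+1) 1 = e N 0 + (4*N+2) := by
  have h := E2 N 0 (by omega)
  rwa [show 0+1 = 1 from rfl] at h

lemma L2coeff (N j : ℕ) (hj : j ≤ 2*N) :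
    ((-1:Polynomial ℤ))^(N+1+(j+2)) * X^(e (N+1) (j+2)) * gb (2*N+2) (j+2)
      = (-1)^(N+1+j) * X^(5*N+3+e N j) * gb (2*N) j
      + (-1)^(N+(j+1)) * (X^(4*N+2+e N (j+1)) + X^(6*N+3+e N (j+1))) * gb (2*N) (j+1)
      + (-1)^(N+1+(j+2)) * X^(5*N+2+e N (j+2)) * gb (2*N) (j+2) := by
  rw [gb_star N j hj]
  rw [show 5*N+3+e N j = e (N+1) (j+2) + (2*N - j) from by have := E1 N j hj; omega, pow_add]
  by_cases hj1 : j + 1 ≤ 2*N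
  · rw [show 4*N+2+e N (j+1) = e (N+1) (j+2) from by have := E2' N j hj1; omega]
    rw [show 6*N+3+e N (j+1) = e (N+1) (j+2) + (2*N+1) from by
      have := E2' N j hj1; omega, pow_add]
    by_cases hj2 : j + 2 ≤ 2*N
    · rw [show 5*N+2+e N (j+2) = e (N+1) (j+2) + (j+2) from by
        have := E3 N (j+2) hj2; omega, pow_add]
      ring
    · rw [gb_eq_zero (2*N) (j+2) (by omega)]
      ring
  · have hj' : j = 2*N := by omega
    subst hj'
    rw [gb_eq_zero (2*N) (2*N+1) (by omega), gb_eq_zero (2*N) (2*N+2) (by omega)]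
    ring

lemma L2 (N j : ℕ) (hj : j ≤ 2*N) :
    fJ (N+1) (j+2) = gA N j + gG N (j+1) + gH N (j+2) := by
  unfold fJ aJ gA gG gH
  rw [show 2*(N+1) = 2*N+2 from by ring, L2coeff N j hj]
  simp only [map_add]
  ring

lemma L3 (N : ℕ) : fJ (N+1) 0 = gH N 0 := by
  unfold fJ aJ gH
  rw [show 5*N+2+e N 0 = e (N+1) 0 from by have := E3 N 0 (by omega); omega]
  simp [gb_zero_right]

lemma L4 (N : ℕ) : fJ (N+1) 1 = gG N 0 + gH N 1 := by
  unfold fJ aJ gG gH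
  rw [show 2*(N+1) = 2*N+2 from by ring, gb_one (2*N)]
  rw [show 4*N+2+e N 0 = e (N+1) 1 from by have := E2'' N; omega]
  rw [show 6*N+3+e N 0 = e (N+1) 1 + (2*N+1) from by
    have := E2'' N; omega, pow_add]
  by_cases hN : 1 ≤ 2*N
  · rw [show 5*N+2+e N 1 = e (N+1) 1 + 1 from by have := E3 N 1 hN; omega, pow_add]
    simp only [gb_zero_right, map_add, map_mul, map_pow, map_neg, map_one, map_zero, mul_one]
    ring
  · have hN0 : N = 0 := by omega
    subst hN0
    rw [gb_eq_zero 0 1 (by omega)]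
    simp only [gb_zero_right, map_add, map_mul, map_pow, map_neg, map_one, map_zero,
      mul_one, mul_zero, zero_mul, add_zero]
    ring

lemma gG_top (N : ℕ) : gG N (2*N+1) = 0 := by
  unfold gG; rw [gb_eq_zero (2*N) (2*N+1) (by omega)]; simp

lemma gH_top1 (N : ℕ) : gH N (2*N+1) = 0 := by
  unfold gH; rw [gb_eq_zero (2*N) (2*N+1) (by omega)]; simp

lemma gH_top2 (N : ℕ) : gH N (2*N+2) = 0 := by
  unfold gH; rw [gb_eq_zero (2*N) (2*N+2) (by omega)]; simp

/-- The finite Jacobi triple product identity. -/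
theorem jtp : ∀ N : ℕ,
    C ((X:Polynomial ℤ)^(2*N^2)) *
        ∏ m ∈ Icc 1 N, ((1 - C ((X:Polynomial ℤ)^m) * X) * (X - C ((X:Polynomial ℤ)^(m-1))))
      = ∑ k ∈ range (2*N+1), fJ N k
  | 0 => by
      simp [fJ, aJ, e, T, T']
  | N + 1 => by
      have IH := jtp N
      rw [prod_Icc_succ_top (show 1 ≤ N + 1 by omega)]
      simp only [Nat.add_sub_cancel]
      rw [show 2*(N+1)^2 = 2*N^2 + (4*N+2) from by ring, pow_add, map_mul]
      have hre :
          C ((X:Polynomial ℤ)^(2*N^2)) * C ((X:Polynomial ℤ)^(4*N+2)) *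
            ((∏ m ∈ Icc 1 N, ((1 - C ((X:Polynomial ℤ)^m) * X) * (X - C ((X:Polynomial ℤ)^(m-1)))))
              * ((1 - C ((X:Polynomial ℤ)^(N+1)) * X) * (X - C ((X:Polynomial ℤ)^N))))
          = C ((X:Polynomial ℤ)^(4*N+2)) * ((1 - C ((X:Polynomial ℤ)^(N+1)) * X) * (X - C ((X:Polynomial ℤ)^N)))
            * (C ((X:Polynomial ℤ)^(2*N^2)) *
              ∏ m ∈ Icc 1 N, ((1 - C ((X:Polynomial ℤ)^m) * X) * (X - C ((X:Polynomial ℤ)^(m-1))))) := by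
        ring
      rw [hre, IH, Finset.mul_sum]
      rw [Finset.sum_congr rfl (fun k _ => L1 N k)]
      -- now transform the RHS sum
      rw [show 2*(N+1)+1 = (2*N+2)+1 from by ring]
      rw [Finset.sum_range_succ' (fun k => fJ (N+1) k) (2*N+2)]
      rw [show 2*N+2 = 2*N+1+1 from rfl]
      rw [Finset.sum_range_succ' (fun k => fJ (N+1) (k+1)) (2*N+1)]
      have hL2 : ∀ j ∈ range (2*N+1),
          fJ (N+1) (j+1+1) = gA N j + gG N (j+1) + gH N (j+2) := by
        intro j hj
        have hjle : j ≤ 2*N := by have := mem_range.mp hj; omega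
        exact L2 N j hjle
      rw [Finset.sum_congr rfl hL2, L4, L3]
      rw [Finset.sum_add_distrib, Finset.sum_add_distrib, Finset.sum_add_distrib,
        Finset.sum_add_distrib]
      have eG : ∑ k ∈ range (2*N+1), gG N k = (∑ j ∈ range (2*N+1), gG N (j+1)) + gG N 0 := by
        have h := Finset.sum_range_succ' (gG N) (2*N+1)
        rw [Finset.sum_range_succ (gG N) (2*N+1), gG_top, add_zero] at h
        exact h
      have eH : ∑ k ∈ range (2*N+1), gH N k
          = (∑ j ∈ range (2*N+1), gH N (j+2)) + gH N 1 + gH N 0 := by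
        have h1 := Finset.sum_range_succ' (gH N) (2*N+2)
        have h2 := Finset.sum_range_succ' (fun k => gH N (k+1)) (2*N+1)
        rw [show 2*N+1+1 = 2*N+2 from rfl] at h2
        rw [h2] at h1
        rw [Finset.sum_range_succ (gH N) (2*N+2)] at h1
        rw [show 2*N+2 = 2*N+1+1 from rfl] at h1
        rw [Finset.sum_range_succ (gH N) (2*N+1), gH_top1, gH_top2, add_zero, add_zero] at h1
        exact h1
      rw [eG, eH]
      abel

end Tau7d

namespace Tau7e
open Tau7 Tau7b Tau7c Tau7d

lemma eval_D_shift (G : Polynomial (Polynomial ℤ)) :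
    Polynomial.eval (1 : Polynomial ℤ) (Polynomial.derivative ((X - 1) * G))
      = Polynomial.eval 1 G := by
  rw [derivative_mul]
  simp

/-- "Jacobi derivative identity": differentiating the finite triple product at y = 1. -/
lemma II (N : ℕ) (hN : 1 ≤ N) :
    (X:Polynomial ℤ)^(2*N^2) *
        ((1 - X) * ∏ a ∈ Icc 2 N, ((1 - (X:Polynomial ℤ)^a) * (1 - X^(a-1))))
      = ∑ k ∈ range (2*N+1), aJ N k * (k : Polynomial ℤ) := by
  have hsplit : C ((X:Polynomial ℤ)^(2*N^2)) *
        ∏ m ∈ Icc 1 N, ((1 - C ((X:Polynomial ℤ)^m) * X) * (X - C ((X:Polynomial ℤ)^(m-1))))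
      = (X - 1) * (C ((X:Polynomial ℤ)^(2*N^2)) * ((1 - C (X:Polynomial ℤ) * X) *
          ∏ m ∈ Icc 2 N, ((1 - C ((X:Polynomial ℤ)^m) * X) * (X - C ((X:Polynomial ℤ)^(m-1)))))) := by
    rw [← Finset.insert_Icc_add_one_left_eq_Icc hN, Finset.prod_insert (by simp)]
    simp only [pow_one, Nat.sub_self, pow_zero, map_one]
    ring
  have h := congrArg
    (fun p : Polynomial (Polynomial ℤ) => Polynomial.eval (1 : Polynomial ℤ) (Polynomial.derivative p))
    (jtp N)
  simp only [hsplit] at h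
  rw [eval_D_shift] at h
  rw [show (∑ k ∈ range (2*N+1), fJ N k) = ∑ k ∈ range (2*N+1), C (aJ N k) * X^k from rfl] at h
  simp only [derivative_sum, derivative_C_mul, derivative_X_pow, Polynomial.eval_finset_sum,
    eval_mul, eval_C, eval_pow, eval_X, one_pow, mul_one, eval_prod, eval_sub, eval_one] at h
  rw [h]

end Tau7e

namespace Tau7f
open Tau7 Tau7b Tau7c Tau7d Tau7e

/-- congruence mod X^D in ℤ[X] -/
def Cg (D : ℕ) (f g : Polynomial ℤ) : Prop := (X:Polynomial ℤ)^D ∣ f - g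

lemma Cg.refl {D : ℕ} {f : Polynomial ℤ} : Cg D f f := by unfold Cg; simp

lemma Cg.symm {D : ℕ} {f g : Polynomial ℤ} (h : Cg D f g) : Cg D g f := by
  unfold Cg at h ⊢
  rw [← neg_sub f g]
  exact dvd_neg.mpr h

lemma Cg.trans {D : ℕ} {f g h : Polynomial ℤ} (h1 : Cg D f g) (h2 : Cg D g h) : Cg D f h := by
  unfold Cg at h1 h2 ⊢
  have := dvd_add h1 h2
  rwa [sub_add_sub_cancel] at this

lemma Cg.mul {D : ℕ} {f g u v : Polynomial ℤ} (h1 : Cg D f g) (h2 : Cg D u v) :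
    Cg D (f * u) (g * v) := by
  have : f * u - g * v = (f - g) * u + g * (u - v) := by ring
  unfold Cg
  rw [this]
  exact dvd_add (h1.mul_right u) (h2.mul_left g)

lemma Cg.sum {D : ℕ} {ι : Type*} {s : Finset ι} {f g : ι → Polynomial ℤ}
    (h : ∀ i ∈ s, Cg D (f i) (g i)) : Cg D (∑ i ∈ s, f i) (∑ i ∈ s, g i) := by
  unfold Cg
  rw [← Finset.sum_sub_distrib]
  exact Finset.dvd_sum h

lemma Cg.prod_one {D : ℕ} {ι : Type*} {s : Finset ι} {f : ι → Polynomial ℤ}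
    (h : ∀ i ∈ s, Cg D (f i) 1) : Cg D (∏ i ∈ s, f i) 1 := by
  classical
  induction s using Finset.cons_induction with
  | empty => exact Cg.refl
  | cons a s ha ih =>
    rw [Finset.prod_cons]
    have h1 : Cg D (f a) 1 := h a (Finset.mem_cons_self a s)
    have h2 : Cg D (∏ i ∈ s, f i) 1 := ih fun i hi => h i (Finset.mem_cons_of_mem hi)
    simpa using h1.mul h2

lemma Cg_one_sub_pow {D m : ℕ} (hm : D ≤ m) : Cg D (1 - (X:Polynomial ℤ)^m) 1 := by
  unfold Cg
  have : (1 - (X:Polynomial ℤ)^m) - 1 = -X^m := by ring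
  rw [this, dvd_neg]
  exact pow_dvd_pow X hm

/-- the truncated Euler product -/
noncomputable def PE (M : ℕ) : Polynomial ℤ := ∏ m ∈ Icc 1 M, (1 - (X:Polynomial ℤ)^m)

lemma PE_factor {a b : ℕ} (hab : a ≤ b) :
    PE b = PE a * ∏ m ∈ Ico (a+1) (b+1), (1 - (X:Polynomial ℤ)^m) := by
  unfold PE
  rw [← Finset.Ico_add_one_right_eq_Icc, ← Finset.Ico_add_one_right_eq_Icc,
    ← Finset.prod_Ico_consecutive _ (show 1 ≤ a+1 by omega) (show a+1 ≤ b+1 by omega)]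

lemma PE_cong {a b D : ℕ} (hab : a ≤ b) (hD : D ≤ a + 1) : Cg D (PE b) (PE a) := by
  rw [PE_factor hab]
  have hQ : Cg D (∏ m ∈ Ico (a+1) (b+1), (1 - (X:Polynomial ℤ)^m)) 1 :=
    Cg.prod_one fun m hm => Cg_one_sub_pow (by have := (Finset.mem_Ico.mp hm).1; omega)
  have := (Cg.refl (f := PE a)).mul hQ
  simpa using this

lemma gbPE {n M k : ℕ} (h1 : n + 1 ≤ k) (h2 : k ≤ M) (h3 : n + 1 ≤ M - k + 1) :
    Cg (n+1) (gb M k * PE n) 1 := by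
  have hp : gb M k * PE k = ∏ m ∈ Icc (M-k+1) M, (1 - (X:Polynomial ℤ)^m) := gb_prod M k h2
  have hQdef : PE k = PE n * ∏ m ∈ Ico (n+1) (k+1), (1 - (X:Polynomial ℤ)^m) :=
    PE_factor (by omega)
  have hQ : Cg (n+1) (∏ m ∈ Ico (n+1) (k+1), (1 - (X:Polynomial ℤ)^m)) 1 :=
    Cg.prod_one fun m hm => Cg_one_sub_pow (by have := (Finset.mem_Ico.mp hm).1; omega)
  have hR : Cg (n+1) (∏ m ∈ Icc (M-k+1) M, (1 - (X:Polynomial ℤ)^m)) 1 :=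
    Cg.prod_one fun m hm => Cg_one_sub_pow (by have := (Finset.mem_Icc.mp hm).1; omega)
  have step1 : Cg (n+1) (gb M k * PE n)
      (gb M k * PE n * ∏ m ∈ Ico (n+1) (k+1), (1 - (X:Polynomial ℤ)^m)) := by
    have := (Cg.refl (f := gb M k * PE n)).mul hQ.symm
    simpa using this
  have heq : gb M k * PE n * ∏ m ∈ Ico (n+1) (k+1), (1 - (X:Polynomial ℤ)^m)
      = ∏ m ∈ Icc (M-k+1) M, (1 - (X:Polynomial ℤ)^m) := by
    rw [mul_assoc, ← hQdef, hp]
  exact step1.trans (heq ▸ hR)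

end Tau7f

namespace Tau7g
open Tau7 Tau7b Tau7c Tau7d Tau7e Tau7f

lemma T'_two (k : ℕ) : 2 * T' k = k * (k - 1) := by
  rcases k with _ | m
  · simp [T']
  · show 2 * ((m+1) * (m+1-1) / 2) = (m+1) * (m+1-1)
    rw [show (m+1)-1 = m from rfl]
    exact Nat.mul_div_cancel' (by simpa [Nat.mul_comm] using (Nat.even_mul_succ_self m).two_dvd)

lemma e_eq (N k : ℕ) (hk : k ≤ 2*N) : e N k + N * k = T k + T' N + 2*(N*N) := by
  unfold e
  have h : N * (2*N - k) + N * k = 2*(N*N) := by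
    rw [← Nat.mul_add, show 2*N - k + k = 2*N from by omega]
    ring
  omega

lemma e_plus (N j : ℕ) (hj : j ≤ N) : e N (N+j) = 2*(N*N) + T j := by
  rcases N with _ | M
  · interval_cases j
    simp [e, T, T']
  · set N := M + 1
    have h1 := e_eq N (N+j) (by omega)
    have h2 := T_two (N+j)
    have h3 := T_two j
    have h4 := T'_two N
    rw [show N - 1 = M from rfl] at h4
    have hr : (N+j)*(N+j+1) + N*M = 2*(N*(N+j)) + j*(j+1) := by
      show (M+1+j)*(M+1+j+1) + (M+1)*M = 2*((M+1)*(M+1+j)) + j*(j+1)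
      ring
    omega

lemma e_minus (N j : ℕ) (hj : j + 1 ≤ N) : e N (N-1-j) = 2*(N*N) + T j := by
  obtain ⟨d, hd⟩ : ∃ d, N = j + d + 1 := ⟨N - j - 1, by omega⟩
  subst hd
  rw [show (j + d + 1) - 1 - j = d from by omega]
  have h1 := e_eq (j+d+1) d (by omega)
  have h2 := T_two d
  have h3 := T_two j
  have h4 := T'_two (j+d+1)
  rw [show (j+d+1) - 1 = j+d from rfl] at h4
  have hr : d*(d+1) + (j+d+1)*(j+d) = j*(j+1) + 2*((j+d+1)*d) := by ring
  omega

lemma T_ge (j : ℕ) : j ≤ T j := by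
  have h2 := T_two j
  have h3 : j*(j+1) = j*j + j := by ring
  have h4 : j ≤ j * j := by nlinarith
  omega

lemma e_lb (N k : ℕ) (hk : k ≤ 2*N) : 2*(N*N) ≤ e N k := by
  rcases le_or_gt N k with h | h
  · obtain ⟨j, rfl⟩ : ∃ j, k = N + j := ⟨k - N, by omega⟩
    rw [e_plus N j (by omega)]
    omega
  · obtain ⟨j, hk', hjN⟩ : ∃ j, k = N - 1 - j ∧ j + 1 ≤ N := ⟨N - 1 - k, by omega, by omega⟩
    subst hk'
    rw [e_minus N j hjN]
    omega

end Tau7g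

namespace Tau7h
open Tau7 Tau7b Tau7c Tau7d Tau7e Tau7f Tau7g

lemma key_range (n k : ℕ) (hk : k ≤ 2*(2*n+2))
    (he : e (2*n+2) k ≤ 2*((2*n+2)*(2*n+2)) + n) :
    n+1 ≤ k ∧ k + (n+1) ≤ 2*(2*n+2) := by
  rcases le_or_gt (2*n+2) k with h | h
  · obtain ⟨j, rfl⟩ : ∃ j, k = (2*n+2) + j := ⟨k - (2*n+2), by omega⟩
    rw [e_plus (2*n+2) j (by omega)] at he
    have := T_ge j
    omega
  · obtain ⟨j, hk', hjN⟩ : ∃ j, k = (2*n+2) - 1 - j ∧ j + 1 ≤ 2*n+2 :=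
      ⟨(2*n+2) - 1 - k, by omega, by omega⟩
    subst hk'
    rw [e_minus (2*n+2) j hjN] at he
    have := T_ge j
    omega

lemma cg_of_eq {D : ℕ} {f g : Polynomial ℤ} (h : f = g) : Cg D f g := by
  unfold Cg; rw [h]; simp

lemma cg_lift {d a : ℕ} {f g : Polynomial ℤ} (h : Cg d f g) :
    Cg (a + d) ((X:Polynomial ℤ)^a * f) (X^a * g) := by
  unfold Cg at h ⊢
  rw [← mul_sub, pow_add]
  exact mul_dvd_mul_left _ h

lemma cg_zero {D : ℕ} {f : Polynomial ℤ} (h : (X:Polynomial ℤ)^D ∣ f) : Cg D f 0 := by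
  unfold Cg; simpa using h

/-- Step A: per-term congruence -/
lemma stepA (n k : ℕ) (hk : k ≤ 2*(2*n+2)) :
    Cg (2*((2*n+2)*(2*n+2)) + (n+1))
      (aJ (2*n+2) k * (k : Polynomial ℤ) * PE n)
      (C ((-1:ℤ)^((2*n+2)+k) * (k:ℤ)) * X^(e (2*n+2) k)) := by
  have hC : C ((-1:ℤ)^((2*n+2)+k) * (k:ℤ))
      = (-1:Polynomial ℤ)^((2*n+2)+k) * (k : Polynomial ℤ) := by
    simp [map_mul, map_pow]
  by_cases he : e (2*n+2) k ≤ 2*((2*n+2)*(2*n+2)) + n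
  · obtain ⟨h1, h2⟩ := key_range n k hk he
    have hgb : Cg (n+1) (gb (2*(2*n+2)) k * PE n) 1 := gbPE h1 hk (by omega)
    -- multiply by X^(e ...) and the constant
    have hlift := cg_lift (a := e (2*n+2) k) hgb
    have hdvd : (X:Polynomial ℤ)^(2*((2*n+2)*(2*n+2)) + (n+1))
        ∣ (X:Polynomial ℤ)^(e (2*n+2) k + (n+1)) :=
      pow_dvd_pow X (by have := e_lb (2*n+2) k hk; omega)
    have hmul := hlift.mul (Cg.refl
      (f := (-1:Polynomial ℤ)^((2*n+2)+k) * (k : Polynomial ℤ)) (D := e (2*n+2) k + (n+1)))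
    unfold Cg at hmul ⊢
    have heq : aJ (2*n+2) k * (k : Polynomial ℤ) * PE n
          - C ((-1:ℤ)^((2*n+2)+k) * (k:ℤ)) * X^(e (2*n+2) k)
        = X ^ e (2*n+2) k * (gb (2*(2*n+2)) k * PE n) *
              ((-1:Polynomial ℤ)^((2*n+2)+k) * (k : Polynomial ℤ))
          - X ^ e (2*n+2) k * 1 * ((-1:Polynomial ℤ)^((2*n+2)+k) * (k : Polynomial ℤ)) := by
      rw [hC]
      unfold aJ
      ring
    rw [heq]
    exact hdvd.trans hmul
  · push_neg at he
    have hd1 : (X:Polynomial ℤ)^(2*((2*n+2)*(2*n+2)) + (n+1)) ∣ X^(e (2*n+2) k) :=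
      pow_dvd_pow X (by omega)
    unfold Cg
    apply dvd_sub
    · have heq2 : aJ (2*n+2) k * (k : Polynomial ℤ) * PE n
          = X^(e (2*n+2) k) * ((-1:Polynomial ℤ)^((2*n+2)+k) * gb (2*(2*n+2)) k *
              (k : Polynomial ℤ) * PE n) := by
        unfold aJ; ring
      rw [heq2]
      exact hd1.mul_right _
    · exact hd1.mul_left _

end Tau7h

namespace Tau7i
open Tau7 Tau7b Tau7c Tau7d Tau7e Tau7f Tau7g Tau7h

noncomputable def tP (n k : ℕ) : Polynomial ℤ :=
  C ((-1:ℤ)^((2*n+2)+k) * (k:ℤ)) * X^(e (2*n+2) k)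

/-- the Jacobi theta-like sum -/
noncomputable def JS (n : ℕ) : Polynomial ℤ :=
  ∑ j ∈ range (2*n+2), C ((-1:ℤ)^j * (2*(j:ℤ)+1)) * X^(T j)

lemma pair (n j : ℕ) (hj : j < 2*n+2) :
    tP n ((2*n+2) - 1 - j) + tP n ((2*n+2) + j)
      = C ((-1:ℤ)^j * (2*(j:ℤ)+1)) * X^(2*((2*n+2)*(2*n+2)) + T j) := by
  unfold tP
  rw [e_plus (2*n+2) j (by omega), e_minus (2*n+2) j (by omega)]
  rw [show (2*n+2) + ((2*n+2) - 1 - j) = j + 2*((2*n+1) - j) + 1 from by omega]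
  rw [show (2*n+2) + ((2*n+2) + j) = j + 2*(2*n+2) from by omega]
  have hcast : (((2*n+2) - 1 - j : ℕ) : ℤ) = 2*(n:ℤ)+1 - (j:ℤ) := by
    have h' : (2*n+2) - 1 - j = 2*n+1 - j := by omega
    rw [h', Nat.cast_sub (by omega : j ≤ 2*n+1)]
    push_cast
    ring
  rw [hcast]
  rw [← add_mul, ← map_add]
  congr 1
  simp only [pow_add, pow_mul, neg_one_sq, one_pow, pow_one]
  push_cast
  ring

lemma stepB (n : ℕ) :
    Cg (2*((2*n+2)*(2*n+2)) + (n+1))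
      (∑ k ∈ range (2*(2*n+2)+1), tP n k)
      (X^(2*((2*n+2)*(2*n+2))) * JS n) := by
  have hsplit : ∑ k ∈ range (2*(2*n+2)+1), tP n k
      = (∑ j ∈ range (2*n+2), (tP n ((2*n+2)-1-j) + tP n ((2*n+2)+j)))
          + tP n ((2*n+2)+(2*n+2)) := by
    rw [Finset.sum_add_distrib]
    rw [Finset.sum_range_reflect (fun k => tP n k) (2*n+2)]
    rw [Finset.range_eq_Ico,
      ← Finset.sum_Ico_consecutive (tP n) (Nat.zero_le (2*n+2))
        (by omega : (2*n+2) ≤ 2*(2*n+2)+1)]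
    rw [Finset.sum_Ico_eq_sum_range (f := tP n) (m := 2*n+2) (n := 2*(2*n+2)+1)]
    rw [show 2*(2*n+2)+1 - (2*n+2) = (2*n+2)+1 from by omega]
    rw [Finset.sum_range_succ]
    rw [← Finset.range_eq_Ico]
    exact (add_assoc _ _ _).symm
  rw [hsplit]
  rw [Finset.sum_congr rfl (fun j hj => pair n j (mem_range.mp hj))]
  have hfac : ∑ j ∈ range (2*n+2), C ((-1:ℤ)^j * (2*(j:ℤ)+1)) * X^(2*((2*n+2)*(2*n+2)) + T j)
      = X^(2*((2*n+2)*(2*n+2))) * JS n := by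
    unfold JS
    rw [Finset.mul_sum]
    refine Finset.sum_congr rfl fun j _ => ?_
    rw [pow_add]
    ring
  rw [hfac]
  have hdvd : (X:Polynomial ℤ)^(2*((2*n+2)*(2*n+2)) + (n+1)) ∣ tP n ((2*n+2)+(2*n+2)) := by
    unfold tP
    rw [e_plus (2*n+2) (2*n+2) le_rfl]
    have hT := T_ge (2*n+2)
    exact (pow_dvd_pow X (by omega)).mul_left _
  unfold Cg
  simpa [add_sub_cancel_left] using hdvd

/-- Jacobi's identity for the cube of the Euler product, truncated mod X^(n+1). -/
theorem jacobi (n : ℕ) : (X:Polynomial ℤ)^(n+1) ∣ (PE n)^3 - JS n := by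
  have hII := II (2*n+2) (by omega)
  rw [show ((2*n+2):ℕ)^2 = (2*n+2)*(2*n+2) from sq (2*n+2)] at hII
  have hprod : (1 - (X:Polynomial ℤ)) *
        ∏ a ∈ Icc 2 (2*n+2), ((1 - (X:Polynomial ℤ)^a) * (1 - X^(a-1)))
      = PE (2*n+2) * PE (2*n+1) := by
    rw [Finset.prod_mul_distrib]
    have h1 : (1 - (X:Polynomial ℤ)) * ∏ a ∈ Icc 2 (2*n+2), (1 - (X:Polynomial ℤ)^a)
        = PE (2*n+2) := by
      unfold PE
      rw [← Finset.insert_Icc_add_one_left_eq_Icc (show 1 ≤ 2*n+2 by omega),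
        Finset.prod_insert (by simp), pow_one]
      rfl
    have h2 : ∏ a ∈ Icc 2 (2*n+2), (1 - (X:Polynomial ℤ)^(a-1)) = PE (2*n+1) := by
      unfold PE
      rw [← Finset.Ico_add_one_right_eq_Icc, ← Finset.Ico_add_one_right_eq_Icc, Finset.prod_Ico_eq_prod_range,
        Finset.prod_Ico_eq_prod_range]
      rw [show 2*n+2+1-2 = 2*n+1 from by omega, show 2*n+1+1-1 = 2*n+1 from by omega]
      refine Finset.prod_congr rfl fun i _ => ?_
      rw [show 2+i-1 = 1+i from by omega]
    rw [← h1, ← h2]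
    ring
  rw [hprod] at hII
  -- multiply by PE n
  have hIIP : X^(2*((2*n+2)*(2*n+2))) * (PE (2*n+2) * PE (2*n+1) * PE n)
      = ∑ k ∈ range (2*(2*n+2)+1), aJ (2*n+2) k * (k : Polynomial ℤ) * PE n := by
    rw [← Finset.sum_mul, ← hII]
    ring
  -- chain of congruences
  have c1 : Cg (n+1) (PE (2*n+2) * PE (2*n+1) * PE n) ((PE n)^3) := by
    have a1 := PE_cong (show n ≤ 2*n+2 by omega) (le_refl (n+1))
    have a2 := PE_cong (show n ≤ 2*n+1 by omega) (le_refl (n+1))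
    have := (a1.mul a2).mul (Cg.refl (f := PE n) (D := n+1))
    refine this.trans (cg_of_eq (by ring))
  have c1' := cg_lift (a := 2*((2*n+2)*(2*n+2))) c1
  have c2 : Cg (2*((2*n+2)*(2*n+2)) + (n+1))
      (X^(2*((2*n+2)*(2*n+2))) * (PE (2*n+2) * PE (2*n+1) * PE n))
      (X^(2*((2*n+2)*(2*n+2))) * JS n) := by
    refine (cg_of_eq hIIP).trans ((Cg.sum ?_).trans (stepB n))
    intro k hk
    exact stepA n k (by have := mem_range.mp hk; omega)
  have c3 := (c1'.symm.trans c2)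
  unfold Cg at c3
  rw [← mul_sub] at c3
  rw [pow_add] at c3
  exact (mul_dvd_mul_iff_left (a := (X:Polynomial ℤ)^(2*((2*n+2)*(2*n+2))))
    (pow_ne_zero _ X_ne_zero)).mp c3

end Tau7i

namespace Tau7j
open Tau7 Tau7b Tau7c Tau7d Tau7e Tau7f Tau7g Tau7h Tau7i

lemma cg_coeff {D : ℕ} {f g : Polynomial ℤ} (h : Cg D f g) {i : ℕ} (hi : i < D) :
    f.coeff i = g.coeff i := by
  have := Polynomial.X_pow_dvd_iff.mp h i hi
  rw [Polynomial.coeff_sub, sub_eq_zero] at this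
  exact this

lemma E_coeff_PE (j M : ℕ) (hj : j ≤ M) :
    PowerSeries.coeff j (Epriv 1) = (PE M).coeff j := by
  rw [Epriv, PowerSeries.coeff_mk]
  have h1 : (∏ m ∈ Icc 1 j, (1 - (PowerSeries.X : PowerSeries ℤ) ^ (1*m)))
      = ((PE j : Polynomial ℤ) : PowerSeries ℤ) := by
    unfold PE
    rw [← Polynomial.coeToPowerSeries.ringHom_apply, map_prod]
    refine Finset.prod_congr rfl fun m _ => ?_
    simp [one_mul]
  rw [h1, Polynomial.coeff_coe]
  exact (cg_coeff (D := j+1) (PE_cong hj (le_refl (j+1))) (Nat.lt_succ_self j)).symm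

lemma E_sub_PE (n : ℕ) : (PowerSeries.X : PowerSeries ℤ)^(n+1) ∣
    Epriv 1 - ((PE n : Polynomial ℤ) : PowerSeries ℤ) := by
  rw [PowerSeries.X_pow_dvd_iff]
  intro i hi
  rw [map_sub, Polynomial.coeff_coe, E_coeff_PE i n (by omega), sub_self]

lemma E24_coeff (n : ℕ) :
    PowerSeries.coeff n ((Epriv 1)^24) = ((PE n)^24).coeff n := by
  have h := (E_sub_PE n).trans (sub_dvd_pow_sub_pow _ _ 24)
  rw [PowerSeries.X_pow_dvd_iff] at h
  have h2 := h n (by omega)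
  rw [map_sub, sub_eq_zero] at h2
  rw [h2, ← Polynomial.coe_pow, Polynomial.coeff_coe]

end Tau7j

namespace Tau7k
open Tau7 Tau7b Tau7c Tau7d Tau7e Tau7f Tau7g Tau7h Tau7i Tau7j

instance : Fact (Nat.Prime 7) := ⟨by norm_num⟩

noncomputable def ρ : Polynomial ℤ →+* Polynomial (ZMod 7) :=
  Polynomial.mapRingHom (Int.castRingHom (ZMod 7))

lemma Tmod (x : ℕ) :
    T x % 7 = 0 ∨ T x % 7 = 1 ∨ T x % 7 = 3 ∨ (T x % 7 = 6 ∧ (2*x+1) % 7 = 0) := by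
  obtain ⟨q, r, hr, rfl⟩ : ∃ q r, r < 7 ∧ x = 7*q + r :=
    ⟨x/7, x%7, Nat.mod_lt _ (by norm_num), by omega⟩
  have h2 := T_two (7*q+r)
  have hexp : (7*q+r)*(7*q+r+1) = 49*(q*q) + 7*(q*(2*r+1)) + r*(r+1) := by ring
  interval_cases r <;> omega

lemma JS7coeff (n j : ℕ) (hj : j % 7 = 2 ∨ j % 7 = 4 ∨ j % 7 = 5 ∨ j % 7 = 6) :
    (ρ (JS n)).coeff j = 0 := by
  unfold JS
  rw [map_sum, Polynomial.finset_sum_coeff]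
  apply Finset.sum_eq_zero
  intro x _
  show ((Polynomial.mapRingHom (Int.castRingHom (ZMod 7)))
      (C ((-1:ℤ)^x * (2*(x:ℤ)+1)) * X^(T x))).coeff j = 0
  rw [Polynomial.coe_mapRingHom, Polynomial.map_mul, Polynomial.map_C, Polynomial.map_pow,
    Polynomial.map_X, Polynomial.coeff_C_mul, Polynomial.coeff_X_pow]
  by_cases hT : j = T x
  · rcases Tmod x with h|h|h|⟨h6,hd⟩
    · exfalso; omega
    · exfalso; omega
    · exfalso; omega
    · rw [if_pos hT, mul_one, map_mul]
      have hz : (Int.castRingHom (ZMod 7)) (2*(x:ℤ)+1) = 0 := by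
        rw [show (2*(x:ℤ)+1) = ((2*x+1 : ℕ) : ℤ) from by push_cast; ring]
        exact (ZMod.intCast_zmod_eq_zero_iff_dvd _ 7).mpr
          (Int.natCast_dvd_natCast.mpr (Nat.dvd_of_mod_eq_zero hd))
      rw [hz, mul_zero]
  · rw [if_neg hT, mul_zero]

theorem tau_mod7 (N : ℕ) (hN : 0 < N)
    (h : N % 7 = 0 ∨ N % 7 = 3 ∨ N % 7 = 5 ∨ N % 7 = 6) :
    (7 : ℤ) ∣ tauPriv N := by
  have hmod : (N-1) % 7 = 2 ∨ (N-1) % 7 = 4 ∨ (N-1) % 7 = 5 ∨ (N-1) % 7 = 6 := by omega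
  unfold tauPriv
  rw [E24_coeff (N-1)]
  suffices hs : (((PE (N-1) ^ 24).coeff (N-1) : ℤ) : ZMod 7) = 0 by
    have hzz := (ZMod.intCast_zmod_eq_zero_iff_dvd _ 7).mp hs
    exact_mod_cast hzz
  rw [show ((((PE (N-1) ^ 24).coeff (N-1) : ℤ)) : ZMod 7)
      = ((((PE (N-1) ^ 24).coeff (N-1) : ℤ)) : ZMod 7) from rfl]
  have hco : (((PE (N-1) ^ 24).coeff (N-1) : ℤ) : ZMod 7)
      = (ρ (PE (N-1) ^ 24)).coeff (N-1) := by
    rw [ρ, Polynomial.coe_mapRingHom, Polynomial.coeff_map]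
    rfl
  rw [hco, map_pow]
  set n := N - 1 with hn
  set A := ρ (PE n) with hA
  have h24 : A^24 = Polynomial.expand (ZMod 7) 7 (A^3) * A^3 := by
    have h7 : Polynomial.expand (ZMod 7) 7 A = A^7 := by
      have hfr := Polynomial.map_frobenius_expand 7 A
      rwa [ZMod.frobenius_zmod, Polynomial.map_id] at hfr
    rw [map_pow, h7]
    ring
  rw [h24]
  set B := Polynomial.expand (ZMod 7) 7 (A ^ 3) with hB
  obtain ⟨c, hc⟩ : ∃ c, A^3 = ρ (JS n) + X^(n+1) * c := by
    obtain ⟨d, hd⟩ := jacobi n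
    refine ⟨ρ d, ?_⟩
    have hh := congrArg ρ hd
    rw [map_sub, map_mul, map_pow, map_pow] at hh
    have hx : ρ X = X := by rw [ρ, Polynomial.coe_mapRingHom, Polynomial.map_X]
    rw [hx] at hh
    rw [← hA] at hh
    linear_combination hh
  rw [hc, mul_add, Polynomial.coeff_add]
  have hz2 : (B * (X^(n+1) * c)).coeff n = 0 := by
    have hdvd : (X:Polynomial (ZMod 7))^(n+1) ∣ B * (X^(n+1) * c) := ⟨B * c, by ring⟩
    exact Polynomial.X_pow_dvd_iff.mp hdvd n (by omega)
  rw [hz2, add_zero, Polynomial.coeff_mul]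
  apply Finset.sum_eq_zero
  rintro ⟨i, j⟩ hij
  rw [Finset.HasAntidiagonal.mem_antidiagonal] at hij
  by_cases h7i : 7 ∣ i
  · have hj : j % 7 = 2 ∨ j % 7 = 4 ∨ j % 7 = 5 ∨ j % 7 = 6 := by omega
    rw [JS7coeff n j hj, mul_zero]
  · rw [hB, Polynomial.coeff_expand (by norm_num : 0 < 7), if_neg h7i, zero_mul]

end Tau7k

end Tau7Private

open PowerSeries Finset

/-- Ramanujan tau: τ(n) = [q^{n-1}](E₁²⁴), so that ∑_{n≥1} τ(n)qⁿ = q·E₁²⁴. -/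
noncomputable def tau (n : ℕ) : ℤ :=
  PowerSeries.coeff (n - 1) ((E 1) ^ 24)

theorem tau_congruence_mod7 (N : ℕ) (hN : 0 < N)
    (h : N % 7 = 0 ∨ N % 7 = 3 ∨ N % 7 = 5 ∨ N % 7 = 6) :
    (7 : ℤ) ∣ tau N := by
  exact Tau7k.tau_mod7 N hN h
end
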